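/- Suppose the limiting system (ODE-Λ) has a solution (Λ₁, Λ₂) on [0, T], let (S, r) solve (ODE-Sr), and define Θ, Θ₁, Θ₂ from (Λ₁, Λ₂, S), together with Z₀ = −B₀(Θ + Θ₁), Z₁ = A + G − B(Θ + Θ₁), Θ̂ = I_N ⊗ Θ and Θ̂₁ = 𝟏_{N×1} ⊗ Θ₁. Let 𝐏̌₁ be the unique solution of (ODE-P̌₁). Then the linear terminal value problem (ODE-P̌₁₂): −d𝐏̌₁₂/dt = Θ̂ᵀ(𝐑 + 𝓜₂(2𝐏̌₁))Θ̂₁ − 𝐏̌₁𝐁̂Θ̂₁ + (𝐀ᵀ − Θ̂ᵀ𝐁̂ᵀ)𝐏̌₁₂ + 𝐏̌₁₂Z₁ − Θ̂ᵀÎᵀ𝐁₀ᵀ𝐏̌₁₂Z₀ on [0,T], 𝐏̌₁₂(T) = 0, for 𝐏̌₁₂ : [0,T] → ℝ^{Nn×n}, has a unique solution, and there exists Π̌₁₂^N : [0,T] → ℝ^{n×n} such that 𝐏̌₁₂(t) = (Π̌₁₂^N(t)ᵀ, …, Π̌₁₂^N(t)ᵀ)ᵀ, i.e., all N of its n×n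 blocks are equal, for every t ∈ [0,T]. -/

import Mathlib

open Matrix Set

namespace LQ

/-- Frobenius norm of a real matrix. -/
noncomputable def frob {a b : Type*} [Fintype a] [Fintype b] (M : Matrix a b ℝ) : ℝ :=
  Real.sqrt (∑ i, ∑ j, (M i j) ^ 2)

/-- Entrywise ℓ₁ norm of a real matrix. -/
noncomputable def l1norm {a b : Type*} [Fintype a] [Fintype b] (M : Matrix a b ℝ) : ℝ :=
  ∑ i, ∑ j, |M i j|

/-- Block matrix with all diagonal m×m blocks equal to `F` and all off-diagonal blocks equal to `K`. -/
def blockConst (N m : ℕ) (F K : Matrix (Fin m) (Fin m) ℝ) :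
    Matrix (Fin N × Fin m) (Fin N × Fin m) ℝ :=
  Matrix.of fun x y => if x.1 = y.1 then F x.2 y.2 else K x.2 y.2

/-- Block matrix with diagonal blocks `Λ₁` and off-diagonal blocks `Λ₂ / N`. -/
noncomputable def blockPN (N n : ℕ) (Λ₁ Λ₂ : Matrix (Fin n) (Fin n) ℝ) :
    Matrix (Fin N × Fin n) (Fin N × Fin n) ℝ :=
  Matrix.of fun x y => if x.1 = y.1 then Λ₁ x.2 y.2 else Λ₂ x.2 y.2 / (N : ℝ)

/-- The permutation matrix exchanging the i-th and j-th block rows of `I_{Nn}`. -/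
def Jswap (N n : ℕ) (i j : Fin N) : Matrix (Fin N × Fin n) (Fin N × Fin n) ℝ :=
  Matrix.of fun x y => if y.1 = Equiv.swap i j x.1 ∧ y.2 = x.2 then 1 else 0

/-- `I_N ⊗ M`. -/
def kronIN (N : ℕ) {a b : ℕ} (M : Matrix (Fin a) (Fin b) ℝ) :
    Matrix (Fin N × Fin a) (Fin N × Fin b) ℝ :=
  Matrix.of fun x y => if x.1 = y.1 then M x.2 y.2 else 0

/-- `𝟏_{N×1} ⊗ M`. -/
def stackN (N : ℕ) {a b : ℕ} (M : Matrix (Fin a) (Fin b) ℝ) :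
    Matrix (Fin N × Fin a) (Fin b) ℝ :=
  Matrix.of fun x y => M x.2 y

/-- Data of the LQ mean field social optimization problem. -/
structure Params (n n₁ : ℕ) where
  A : Matrix (Fin n) (Fin n) ℝ
  G : Matrix (Fin n) (Fin n) ℝ
  Γ : Matrix (Fin n) (Fin n) ℝ
  Γf : Matrix (Fin n) (Fin n) ℝ
  B : Matrix (Fin n) (Fin n₁) ℝ
  B0 : Matrix (Fin n) (Fin n₁) ℝ
  B1 : Matrix (Fin n) (Fin n₁) ℝ
  D : Matrix (Fin n) (Fin 1) ℝ
  D0 : Matrix (Fin n) (Fin 1) ℝ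
  Q : Matrix (Fin n) (Fin n) ℝ
  Qf : Matrix (Fin n) (Fin n) ℝ
  R : Matrix (Fin n₁) (Fin n₁) ℝ
  T : ℝ

namespace Params

variable {n n₁ : ℕ} (p : Params n n₁)

/-- Standing hypotheses: positive dimensions, positive horizon, symmetric weights. -/
def Standing : Prop :=
  1 ≤ n ∧ 1 ≤ n₁ ∧ 0 < p.T ∧ p.Q.IsSymm ∧ p.Qf.IsSymm ∧ p.R.IsSymm

/-- Q^Γ = Γᵀ Q Γ − Q Γ − Γᵀ Q. -/
def QΓ : Matrix (Fin n) (Fin n) ℝ := p.Γᵀ * p.Q * p.Γ - p.Q * p.Γ - p.Γᵀ * p.Q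

/-- Q_f^Γ = Γ_fᵀ Q_f Γ_f − Q_f Γ_f − Γ_fᵀ Q_f. -/
def QfΓ : Matrix (Fin n) (Fin n) ℝ := p.Γfᵀ * p.Qf * p.Γf - p.Qf * p.Γf - p.Γfᵀ * p.Qf

/-- ℛ₁(Λ₁) = R + B₁ᵀ Λ₁ B₁. -/
def R1 (Λ₁ : Matrix (Fin n) (Fin n) ℝ) : Matrix (Fin n₁) (Fin n₁) ℝ :=
  p.R + p.B1ᵀ * Λ₁ * p.B1

/-- ℛ₂(Λ₁,Λ₂) = R + B₁ᵀ Λ₁ B₁ + B₀ᵀ(Λ₁+Λ₂)B₀. -/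
def R2 (Λ₁ Λ₂ : Matrix (Fin n) (Fin n) ℝ) : Matrix (Fin n₁) (Fin n₁) ℝ :=
  p.R + p.B1ᵀ * Λ₁ * p.B1 + p.B0ᵀ * (Λ₁ + Λ₂) * p.B0

/-- Ψ₁. -/
noncomputable def Ψ₁ (Λ₁ : Matrix (Fin n) (Fin n) ℝ) : Matrix (Fin n) (Fin n) ℝ :=
  Λ₁ * p.B * (p.R1 Λ₁)⁻¹ * p.Bᵀ * Λ₁ - Λ₁ * p.A - p.Aᵀ * Λ₁ - p.Q

/-- Ψ₂. -/
noncomputable def Ψ₂ (Λ₁ Λ₂ : Matrix (Fin n) (Fin n) ℝ) : Matrix (Fin n) (Fin n) ℝ :=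
  (Λ₁ + Λ₂) * p.B * (p.R2 Λ₁ Λ₂)⁻¹ * p.Bᵀ * (Λ₁ + Λ₂)
    - Λ₁ * p.B * (p.R1 Λ₁)⁻¹ * p.Bᵀ * Λ₁
    - (Λ₁ * p.G + Λ₂ * (p.A + p.G))
    - (p.Gᵀ * Λ₁ + (p.Aᵀ + p.Gᵀ) * Λ₂)
    - p.QΓ

/-- Solution of the limiting ODE system (ODE-Λ) on [0,T]. -/
noncomputable def IsSolLim (Λ₁ Λ₂ : ℝ → Matrix (Fin n) (Fin n) ℝ) : Prop :=
  (∀ t ∈ Icc (0 : ℝ) p.T, (Λ₁ t).IsSymm ∧ (Λ₂ t).IsSymm) ∧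
  (∀ t ∈ Icc (0 : ℝ) p.T, (p.R1 (Λ₁ t)).PosDef ∧ (p.R2 (Λ₁ t) (Λ₂ t)).PosDef) ∧
  Λ₁ p.T = p.Qf ∧ Λ₂ p.T = p.QfΓ ∧
  (∀ t ∈ Icc (0 : ℝ) p.T, ∀ i j, HasDerivWithinAt (fun s => Λ₁ s i j)
    (p.Ψ₁ (Λ₁ t) i j) (Icc (0 : ℝ) p.T) t) ∧
  (∀ t ∈ Icc (0 : ℝ) p.T, ∀ i j, HasDerivWithinAt (fun s => Λ₂ s i j)
    (p.Ψ₂ (Λ₁ t) (Λ₂ t) i j) (Icc (0 : ℝ) p.T) t)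

/-! Big (N-agent) matrices. -/

noncomputable def bigA (N : ℕ) : Matrix (Fin N × Fin n) (Fin N × Fin n) ℝ :=
  Matrix.of fun x y => (if x.1 = y.1 then p.A x.2 y.2 else 0) + p.G x.2 y.2 / (N : ℝ)

def bigBhat (N : ℕ) : Matrix (Fin N × Fin n) (Fin N × Fin n₁) ℝ :=
  Matrix.of fun x y => if x.1 = y.1 then p.B x.2 y.2 else 0

def bigB (N : ℕ) (i : Fin N) : Matrix (Fin N × Fin n) (Fin n₁) ℝ :=
  Matrix.of fun x l => if x.1 = i then p.B1 x.2 l else 0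

noncomputable def bigB0 (N : ℕ) : Matrix (Fin N × Fin n) (Fin n₁) ℝ :=
  Matrix.of fun x l => p.B0 x.2 l / (N : ℝ)

def bigD (N : ℕ) (i : Fin N) : Matrix (Fin N × Fin n) (Fin 1) ℝ :=
  Matrix.of fun x l => if x.1 = i then p.D x.2 l else 0

def bigD0 (N : ℕ) : Matrix (Fin N × Fin n) (Fin 1) ℝ :=
  Matrix.of fun x l => p.D0 x.2 l

def bigE (_p : Params n n₁) (N : ℕ) (i : Fin N) : Matrix (Fin n₁) (Fin N × Fin n₁) ℝ :=
  Matrix.of fun k y => if y.1 = i ∧ y.2 = k then 1 else 0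

def bigIhat (_p : Params n n₁) (N : ℕ) : Matrix (Fin n₁) (Fin N × Fin n₁) ℝ :=
  Matrix.of fun k y => if y.2 = k then 1 else 0

noncomputable def bigQ (N : ℕ) : Matrix (Fin N × Fin n) (Fin N × Fin n) ℝ :=
  Matrix.of fun x y => (if x.1 = y.1 then p.Q x.2 y.2 else 0) + p.QΓ x.2 y.2 / (N : ℝ)

noncomputable def bigQf (N : ℕ) : Matrix (Fin N × Fin n) (Fin N × Fin n) ℝ :=
  Matrix.of fun x y => (if x.1 = y.1 then p.Qf x.2 y.2 else 0) + p.QfΓ x.2 y.2 / (N : ℝ)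

def bigR (N : ℕ) : Matrix (Fin N × Fin n₁) (Fin N × Fin n₁) ℝ :=
  Matrix.of fun x y => if x.1 = y.1 then p.R x.2 y.2 else 0

/-- 𝓜₀. -/
noncomputable def M0 (N : ℕ) (Z : Matrix (Fin N × Fin n) (Fin N × Fin n) ℝ) :
    Matrix (Fin 1) (Fin 1) ℝ :=
  (1 / 2 : ℝ) • (∑ i : Fin N, (p.bigD N i)ᵀ * Z * p.bigD N i)
    + (1 / 2 : ℝ) • ((p.bigD0 N)ᵀ * Z * p.bigD0 N)

/-- 𝓜₁. -/
noncomputable def M1 (N : ℕ) (Z : Matrix (Fin N × Fin n) (Fin N × Fin n) ℝ) :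
    Matrix (Fin 1) (Fin N × Fin n₁) ℝ :=
  (∑ i : Fin N, (p.bigD N i)ᵀ * Z * p.bigB N i * p.bigE N i)
    + (p.bigD0 N)ᵀ * Z * p.bigB0 N * p.bigIhat N

/-- 𝓜₂. -/
noncomputable def M2 (N : ℕ) (Z : Matrix (Fin N × Fin n) (Fin N × Fin n) ℝ) :
    Matrix (Fin N × Fin n₁) (Fin N × Fin n₁) ℝ :=
  (1 / 2 : ℝ) • (∑ i : Fin N, (p.bigE N i)ᵀ * (p.bigB N i)ᵀ * Z * p.bigB N i * p.bigE N i)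
    + (1 / 2 : ℝ) • ((p.bigIhat N)ᵀ * (p.bigB0 N)ᵀ * Z * p.bigB0 N * p.bigIhat N)

/-- Right-hand side of the Riccati equation (ODE-P). -/
noncomputable def PRic (N : ℕ) (P : Matrix (Fin N × Fin n) (Fin N × Fin n) ℝ) :
    Matrix (Fin N × Fin n) (Fin N × Fin n) ℝ :=
  P * p.bigBhat N * (p.bigR N + (2 : ℝ) • p.M2 N P)⁻¹ * (p.bigBhat N)ᵀ * P
    - P * p.bigA N - (p.bigA N)ᵀ * P - p.bigQ N

/-- Solution of the large-scale Riccati equation (ODE-P) on [0,T]. -/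
noncomputable def IsSolP (N : ℕ) (P : ℝ → Matrix (Fin N × Fin n) (Fin N × Fin n) ℝ) : Prop :=
  (∀ t ∈ Icc (0 : ℝ) p.T, (P t).IsSymm) ∧
  (∀ t ∈ Icc (0 : ℝ) p.T, (p.bigR N + (2 : ℝ) • p.M2 N (P t)).PosDef) ∧
  P p.T = p.bigQf N ∧
  (∀ t ∈ Icc (0 : ℝ) p.T, ∀ x y, HasDerivWithinAt (fun s => P s x y)
    (p.PRic N (P t) x y) (Icc (0 : ℝ) p.T) t)

/-- Solution of the companion linear equation (ODE-S) on [0,T], relative to `P`. -/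
noncomputable def IsSolS (N : ℕ) (P : ℝ → Matrix (Fin N × Fin n) (Fin N × Fin n) ℝ)
    (S : ℝ → Matrix (Fin N × Fin n) (Fin 1) ℝ) : Prop :=
  S p.T = 0 ∧
  (∀ t ∈ Icc (0 : ℝ) p.T, ∀ x y, HasDerivWithinAt (fun s => S s x y)
    ((P t * p.bigBhat N * (p.bigR N + (2 : ℝ) • p.M2 N (P t))⁻¹ *
        ((p.bigBhat N)ᵀ * S t + (p.M1 N (P t))ᵀ) - (p.bigA N)ᵀ * S t) x y)
    (Icc (0 : ℝ) p.T) t)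

/-- Solution of the companion scalar equation (ODE-r) on [0,T], relative to `P` and `S`. -/
noncomputable def IsSolr (N : ℕ) (P : ℝ → Matrix (Fin N × Fin n) (Fin N × Fin n) ℝ)
    (S : ℝ → Matrix (Fin N × Fin n) (Fin 1) ℝ) (r : ℝ → ℝ) : Prop :=
  r p.T = 0 ∧
  (∀ t ∈ Icc (0 : ℝ) p.T, HasDerivWithinAt r
    (((((S t)ᵀ * p.bigBhat N + p.M1 N (P t)) * (p.bigR N + (2 : ℝ) • p.M2 N (P t))⁻¹ *
        ((p.bigBhat N)ᵀ * S t + (p.M1 N (P t))ᵀ)) - (2 : ℝ) • p.M0 N (P t)) 0 0)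
    (Icc (0 : ℝ) p.T) t)

/-- Asymptotic solvability of the LQ mean field social optimization problem. -/
noncomputable def AsympSolvable : Prop :=
  ∃ N₀ : ℕ, 1 ≤ N₀ ∧ ∃ c₀ : ℝ, 0 < c₀ ∧ ∃ C : ℝ,
    ∀ N : ℕ, N₀ ≤ N →
      ∃ P : ℝ → Matrix (Fin N × Fin n) (Fin N × Fin n) ℝ,
        p.IsSolP N P ∧
        (∀ t ∈ Icc (0 : ℝ) p.T, l1norm (P t) / (N : ℝ) ≤ C) ∧
        (∀ t ∈ Icc (0 : ℝ) p.T,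
          (p.bigR N + (2 : ℝ) • p.M2 N (P t) - c₀ • 1).PosSemidef)

/-! The rescaled low-dimensional system. -/

/-- E^N. -/
noncomputable def EN (N : ℕ) (Λ₁ Λ₂ : Matrix (Fin n) (Fin n) ℝ) :
    Matrix (Fin n₁) (Fin n₁) ℝ :=
  (1 / (N : ℝ)) •
    ((p.R2 Λ₁ Λ₂ - (1 / (N : ℝ)) • (p.B0ᵀ * Λ₂ * p.B0))⁻¹ - (p.R1 Λ₁)⁻¹)

/-- H^N. -/
noncomputable def HN (N : ℕ) (Λ₁ Λ₂ : Matrix (Fin n) (Fin n) ℝ) :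
    Matrix (Fin n₁) (Fin n₁) ℝ :=
  p.EN N Λ₁ Λ₂ + (p.R1 Λ₁)⁻¹

/-- g₁. -/
noncomputable def g₁ (N : ℕ) (Λ₁ Λ₂ : Matrix (Fin n) (Fin n) ℝ) :
    Matrix (Fin n) (Fin n) ℝ :=
  Λ₁ * p.B * p.EN N Λ₁ Λ₂ * p.Bᵀ * Λ₁
  + (1 - 1 / (N : ℝ)) •
      (Λ₂ * p.B * p.EN N Λ₁ Λ₂ * p.Bᵀ * Λ₁ + Λ₁ * p.B * p.EN N Λ₁ Λ₂ * p.Bᵀ * Λ₂)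
  + (1 / (N : ℝ) - 1 / (N : ℝ) ^ 2) •
      (Λ₂ * p.B * (p.HN N Λ₁ Λ₂ + ((N : ℝ) - 2) • p.EN N Λ₁ Λ₂) * p.Bᵀ * Λ₂)
  - (1 / (N : ℝ)) •
      ((Λ₁ * p.G + p.Gᵀ * Λ₁) + (1 - 1 / (N : ℝ)) • (Λ₂ * p.G + p.Gᵀ * Λ₂))
  - (1 / (N : ℝ)) • p.QΓ

/-- g₂. -/
noncomputable def g₂ (N : ℕ) (Λ₁ Λ₂ : Matrix (Fin n) (Fin n) ℝ) :
    Matrix (Fin n) (Fin n) ℝ :=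
  (Λ₁ + Λ₂) * p.B *
      ((N : ℝ) • p.EN N Λ₁ Λ₂ + (p.R1 Λ₁)⁻¹ - (p.R2 Λ₁ Λ₂)⁻¹) * p.Bᵀ * (Λ₁ + Λ₂)
  - (2 / (N : ℝ)) • (Λ₂ * p.B * (p.R1 Λ₁)⁻¹ * p.Bᵀ * Λ₂)
  + (1 / (N : ℝ) - 2) • (Λ₂ * p.B * p.EN N Λ₁ Λ₂ * p.Bᵀ * Λ₂)
  - Λ₁ * p.B * p.EN N Λ₁ Λ₂ * p.Bᵀ * Λ₂
  - Λ₂ * p.B * p.EN N Λ₁ Λ₂ * p.Bᵀ * Λ₁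
  + (1 / (N : ℝ)) • (Λ₂ * p.G + p.Gᵀ * Λ₂)

/-- Solution of the rescaled system (ODE-Λ^N) on [0,T]. -/
noncomputable def IsSolLamN (N : ℕ) (Λ₁ Λ₂ : ℝ → Matrix (Fin n) (Fin n) ℝ) : Prop :=
  (∀ t ∈ Icc (0 : ℝ) p.T, (Λ₁ t).IsSymm ∧ (Λ₂ t).IsSymm) ∧
  (∀ t ∈ Icc (0 : ℝ) p.T, (p.R1 (Λ₁ t)).PosDef ∧ (p.R2 (Λ₁ t) (Λ₂ t)).PosDef ∧
    (p.R2 (Λ₁ t) (Λ₂ t) - (1 / (N : ℝ)) • (p.B0ᵀ * Λ₂ t * p.B0)).PosDef) ∧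
  Λ₁ p.T = p.Qf + (1 / (N : ℝ)) • p.QfΓ ∧ Λ₂ p.T = p.QfΓ ∧
  (∀ t ∈ Icc (0 : ℝ) p.T, ∀ i j, HasDerivWithinAt (fun s => Λ₁ s i j)
    ((p.Ψ₁ (Λ₁ t) + p.g₁ N (Λ₁ t) (Λ₂ t)) i j) (Icc (0 : ℝ) p.T) t) ∧
  (∀ t ∈ Icc (0 : ℝ) p.T, ∀ i j, HasDerivWithinAt (fun s => Λ₂ s i j)
    ((p.Ψ₂ (Λ₁ t) (Λ₂ t) + p.g₂ N (Λ₁ t) (Λ₂ t)) i j) (Icc (0 : ℝ) p.T) t)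

/-! Companion (mean-field) equations. -/

/-- φ₁. -/
noncomputable def φ₁ (Λ₁ Λ₂ : Matrix (Fin n) (Fin n) ℝ) (S : Matrix (Fin n) (Fin 1) ℝ) :
    Matrix (Fin n) (Fin 1) ℝ :=
  (Λ₁ + Λ₂) * p.B * (p.R2 Λ₁ Λ₂)⁻¹ *
      (p.Bᵀ * S + p.B1ᵀ * Λ₁ * p.D + p.B0ᵀ * (Λ₁ + Λ₂) * p.D0)
    - (p.A + p.G)ᵀ * S

/-- φ₂. -/
noncomputable def φ₂ (Λ₁ Λ₂ : Matrix (Fin n) (Fin n) ℝ) (S : Matrix (Fin n) (Fin 1) ℝ) :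
    Matrix (Fin 1) (Fin 1) ℝ :=
  (Sᵀ * p.B + p.Dᵀ * Λ₁ * p.B1 + p.D0ᵀ * (Λ₁ + Λ₂) * p.B0) * (p.R2 Λ₁ Λ₂)⁻¹ *
      (p.Bᵀ * S + p.B1ᵀ * Λ₁ * p.D + p.B0ᵀ * (Λ₁ + Λ₂) * p.D0)
    - p.Dᵀ * Λ₁ * p.D - p.D0ᵀ * (Λ₁ + Λ₂) * p.D0

/-- Solution of the limiting companion system (ODE-Sr) on [0,T]. -/
noncomputable def IsSolSr (Λ₁ Λ₂ : ℝ → Matrix (Fin n) (Fin n) ℝ)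
    (S : ℝ → Matrix (Fin n) (Fin 1) ℝ) (r : ℝ → ℝ) : Prop :=
  S p.T = 0 ∧ r p.T = 0 ∧
  (∀ t ∈ Icc (0 : ℝ) p.T, ∀ i j, HasDerivWithinAt (fun s => S s i j)
    (p.φ₁ (Λ₁ t) (Λ₂ t) (S t) i j) (Icc (0 : ℝ) p.T) t) ∧
  (∀ t ∈ Icc (0 : ℝ) p.T, HasDerivWithinAt r
    ((p.φ₂ (Λ₁ t) (Λ₂ t) (S t)) 0 0) (Icc (0 : ℝ) p.T) t)

/-- g₀₁. -/
noncomputable def g01 (N : ℕ) (Λ₁ Λ₂ : Matrix (Fin n) (Fin n) ℝ)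
    (S : Matrix (Fin n) (Fin 1) ℝ) : Matrix (Fin n) (Fin 1) ℝ :=
  (Λ₁ + (1 - 1 / (N : ℝ)) • Λ₂) * p.B *
      (p.R2 Λ₁ Λ₂ - (1 / (N : ℝ)) • (p.B0ᵀ * Λ₂ * p.B0))⁻¹ *
      (p.Bᵀ * S + p.B1ᵀ * Λ₁ * p.D + p.B0ᵀ * (Λ₁ + (1 - 1 / (N : ℝ)) • Λ₂) * p.D0)
  - (Λ₁ + Λ₂) * p.B * (p.R2 Λ₁ Λ₂)⁻¹ *
      (p.Bᵀ * S + p.B1ᵀ * Λ₁ * p.D + p.B0ᵀ * (Λ₁ + Λ₂) * p.D0)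

/-- g₀₂. -/
noncomputable def g02 (N : ℕ) (Λ₁ Λ₂ : Matrix (Fin n) (Fin n) ℝ)
    (S : Matrix (Fin n) (Fin 1) ℝ) : Matrix (Fin 1) (Fin 1) ℝ :=
  (Sᵀ * p.B + p.Dᵀ * Λ₁ * p.B1 + p.D0ᵀ * (Λ₁ + (1 - 1 / (N : ℝ)) • Λ₂) * p.B0) *
      (p.R2 Λ₁ Λ₂ - (1 / (N : ℝ)) • (p.B0ᵀ * Λ₂ * p.B0))⁻¹ *
      (p.Bᵀ * S + p.B1ᵀ * Λ₁ * p.D + p.B0ᵀ * (Λ₁ + (1 - 1 / (N : ℝ)) • Λ₂) * p.D0)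
  - (Sᵀ * p.B + p.Dᵀ * Λ₁ * p.B1 + p.D0ᵀ * (Λ₁ + Λ₂) * p.B0) * (p.R2 Λ₁ Λ₂)⁻¹ *
      (p.Bᵀ * S + p.B1ᵀ * Λ₁ * p.D + p.B0ᵀ * (Λ₁ + Λ₂) * p.D0)
  + (1 / (N : ℝ)) • (p.D0ᵀ * Λ₂ * p.D0)

/-- Solution of the rescaled companion system (ODE-S^N r^N) on [0,T]. -/
noncomputable def IsSolSrN (N : ℕ) (Λ₁ Λ₂ : ℝ → Matrix (Fin n) (Fin n) ℝ)
    (S : ℝ → Matrix (Fin n) (Fin 1) ℝ) (r : ℝ → ℝ) : Prop :=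
  S p.T = 0 ∧ r p.T = 0 ∧
  (∀ t ∈ Icc (0 : ℝ) p.T, ∀ i j, HasDerivWithinAt (fun s => S s i j)
    ((p.φ₁ (Λ₁ t) (Λ₂ t) (S t) + p.g01 N (Λ₁ t) (Λ₂ t) (S t)) i j) (Icc (0 : ℝ) p.T) t) ∧
  (∀ t ∈ Icc (0 : ℝ) p.T, HasDerivWithinAt r
    ((p.φ₂ (Λ₁ t) (Λ₂ t) (S t) + p.g02 N (Λ₁ t) (Λ₂ t) (S t)) 0 0) (Icc (0 : ℝ) p.T) t)

/-! Feedback gains. -/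

/-- Θ = ℛ₁(Λ₁)⁻¹ Bᵀ Λ₁. -/
noncomputable def Theta (Λ₁ : Matrix (Fin n) (Fin n) ℝ) : Matrix (Fin n₁) (Fin n) ℝ :=
  (p.R1 Λ₁)⁻¹ * p.Bᵀ * Λ₁

/-- Θ₁ = (H₁ − H)Bᵀ(Λ₁+Λ₂) + HBᵀΛ₂. -/
noncomputable def Theta1 (Λ₁ Λ₂ : Matrix (Fin n) (Fin n) ℝ) : Matrix (Fin n₁) (Fin n) ℝ :=
  ((p.R2 Λ₁ Λ₂)⁻¹ - (p.R1 Λ₁)⁻¹) * p.Bᵀ * (Λ₁ + Λ₂) + (p.R1 Λ₁)⁻¹ * p.Bᵀ * Λ₂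

/-- Θ₂ = H₁[BᵀS + B₁ᵀΛ₁D + B₀ᵀ(Λ₁+Λ₂)D₀]. -/
noncomputable def Theta2 (Λ₁ Λ₂ : Matrix (Fin n) (Fin n) ℝ) (S : Matrix (Fin n) (Fin 1) ℝ) :
    Matrix (Fin n₁) (Fin 1) ℝ :=
  (p.R2 Λ₁ Λ₂)⁻¹ * (p.Bᵀ * S + p.B1ᵀ * Λ₁ * p.D + p.B0ᵀ * (Λ₁ + Λ₂) * p.D0)

/-- Θ^N. -/
noncomputable def ThetaN (N : ℕ) (Λ₁ Λ₂ : Matrix (Fin n) (Fin n) ℝ) :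
    Matrix (Fin n₁) (Fin n) ℝ :=
  (p.HN N Λ₁ Λ₂ - p.EN N Λ₁ Λ₂) * p.Bᵀ * (Λ₁ - (1 / (N : ℝ)) • Λ₂)

/-- Θ₁^N. -/
noncomputable def Theta1N (N : ℕ) (Λ₁ Λ₂ : Matrix (Fin n) (Fin n) ℝ) :
    Matrix (Fin n₁) (Fin n) ℝ :=
  (N : ℝ) • (p.EN N Λ₁ Λ₂ * p.Bᵀ * Λ₁)
    + (p.HN N Λ₁ Λ₂ + ((N : ℝ) - 2) • p.EN N Λ₁ Λ₂) * p.Bᵀ * Λ₂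

/-- Θ₂^N. -/
noncomputable def Theta2N (N : ℕ) (Λ₁ Λ₂ : Matrix (Fin n) (Fin n) ℝ)
    (S : Matrix (Fin n) (Fin 1) ℝ) : Matrix (Fin n₁) (Fin 1) ℝ :=
  (p.HN N Λ₁ Λ₂ + ((N : ℝ) - 1) • p.EN N Λ₁ Λ₂) *
    (p.Bᵀ * S + p.B1ᵀ * Λ₁ * p.D + p.B0ᵀ * (Λ₁ + (1 - 1 / (N : ℝ)) • Λ₂) * p.D0)

/-- Z₀ = −B₀(Θ + Θ₁). -/
noncomputable def Z0 (Λ₁ Λ₂ : Matrix (Fin n) (Fin n) ℝ) : Matrix (Fin n) (Fin n) ℝ :=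
  -(p.B0 * (p.Theta Λ₁ + p.Theta1 Λ₁ Λ₂))

/-- Z₁ = A + G − B(Θ + Θ₁). -/
noncomputable def Z1 (Λ₁ Λ₂ : Matrix (Fin n) (Fin n) ℝ) : Matrix (Fin n) (Fin n) ℝ :=
  p.A + p.G - p.B * (p.Theta Λ₁ + p.Theta1 Λ₁ Λ₂)

/-! The high-dimensional equations under the decentralized control. -/

/-- RHS of (ODE-P̌₁) (paper's −d𝐏̌₁/dt). -/
noncomputable def Pcheck1RHS (N : ℕ) (Θ : Matrix (Fin n₁) (Fin n) ℝ)
    (P1 : Matrix (Fin N × Fin n) (Fin N × Fin n) ℝ) :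
    Matrix (Fin N × Fin n) (Fin N × Fin n) ℝ :=
  (kronIN N Θ)ᵀ * (p.bigR N + p.M2 N ((2 : ℝ) • P1)) * kronIN N Θ
    + P1 * (p.bigA N - p.bigBhat N * kronIN N Θ)
    + (p.bigA N - p.bigBhat N * kronIN N Θ)ᵀ * P1
    + p.bigQ N

/-- Solution of (ODE-P̌₁) on [0,T], with Θ(t) built from Λ₁(t). -/
noncomputable def IsSolPcheck1 (N : ℕ) (Λ₁ : ℝ → Matrix (Fin n) (Fin n) ℝ)
    (P1 : ℝ → Matrix (Fin N × Fin n) (Fin N × Fin n) ℝ) : Prop :=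
  P1 p.T = p.bigQf N ∧
  (∀ t ∈ Icc (0 : ℝ) p.T, ∀ x y, HasDerivWithinAt (fun s => P1 s x y)
    ((-(p.Pcheck1RHS N (p.Theta (Λ₁ t)) (P1 t))) x y) (Icc (0 : ℝ) p.T) t)

/-- RHS of (ODE-P̌₁₂) (paper's −d𝐏̌₁₂/dt). -/
noncomputable def Pcheck12RHS (N : ℕ) (Λ₁m Λ₂m : Matrix (Fin n) (Fin n) ℝ)
    (P1 : Matrix (Fin N × Fin n) (Fin N × Fin n) ℝ)
    (P12 : Matrix (Fin N × Fin n) (Fin n) ℝ) :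
    Matrix (Fin N × Fin n) (Fin n) ℝ :=
  (kronIN N (p.Theta Λ₁m))ᵀ * (p.bigR N + p.M2 N ((2 : ℝ) • P1)) *
      stackN N (p.Theta1 Λ₁m Λ₂m)
    - P1 * p.bigBhat N * stackN N (p.Theta1 Λ₁m Λ₂m)
    + ((p.bigA N)ᵀ - (kronIN N (p.Theta Λ₁m))ᵀ * (p.bigBhat N)ᵀ) * P12
    + P12 * p.Z1 Λ₁m Λ₂m
    - (kronIN N (p.Theta Λ₁m))ᵀ * (p.bigIhat N)ᵀ * (p.bigB0 N)ᵀ * P12 * p.Z0 Λ₁m Λ₂m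

/-- Solution of (ODE-P̌₁₂) on [0,T]. -/
noncomputable def IsSolPcheck12 (N : ℕ) (Λ₁ Λ₂ : ℝ → Matrix (Fin n) (Fin n) ℝ)
    (P1 : ℝ → Matrix (Fin N × Fin n) (Fin N × Fin n) ℝ)
    (P12 : ℝ → Matrix (Fin N × Fin n) (Fin n) ℝ) : Prop :=
  P12 p.T = 0 ∧
  (∀ t ∈ Icc (0 : ℝ) p.T, ∀ x y, HasDerivWithinAt (fun s => P12 s x y)
    ((-(p.Pcheck12RHS N (Λ₁ t) (Λ₂ t) (P1 t) (P12 t))) x y) (Icc (0 : ℝ) p.T) t)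

/-! The decentralized-control low-dimensional coefficient system. -/

/-- ǧ₁. -/
noncomputable def gc1 (N : ℕ) (Θ : Matrix (Fin n₁) (Fin n) ℝ)
    (L1 L2 : Matrix (Fin n) (Fin n) ℝ) : Matrix (Fin n) (Fin n) ℝ :=
  (1 / (N : ℝ)) •
    (Θᵀ * p.B0ᵀ * (L1 + (1 - 1 / (N : ℝ)) • L2) * p.B0 * Θ
      + (L1 + (1 - 1 / (N : ℝ)) • L2) * p.G
      + p.Gᵀ * (L1 + (1 - 1 / (N : ℝ)) • L2)
      + p.QΓ)

/-- ǧ₂. -/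
noncomputable def gc2 (N : ℕ) (Θ : Matrix (Fin n₁) (Fin n) ℝ)
    (L2 : Matrix (Fin n) (Fin n) ℝ) : Matrix (Fin n) (Fin n) ℝ :=
  -((1 / (N : ℝ)) • (Θᵀ * p.B0ᵀ * L2 * p.B0 * Θ + L2 * p.G + p.Gᵀ * L2))

/-- ǧ₁₂. -/
noncomputable def gc12 (N : ℕ) (Θ Θ₁ : Matrix (Fin n₁) (Fin n) ℝ)
    (L2 : Matrix (Fin n) (Fin n) ℝ) : Matrix (Fin n) (Fin n) ℝ :=
  (1 / (N : ℝ)) • (-(Θᵀ * p.B0ᵀ * L2 * p.B0 * Θ₁) + L2 * p.B * Θ₁)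

/-- ǧ₂₂. -/
noncomputable def gc22 (N : ℕ) (Θ₁ : Matrix (Fin n₁) (Fin n) ℝ)
    (L2 : Matrix (Fin n) (Fin n) ℝ) : Matrix (Fin n) (Fin n) ℝ :=
  -((1 / (N : ℝ)) • (Θ₁ᵀ * p.B0ᵀ * L2 * p.B0 * Θ₁))

/-- ǧ₀₁. -/
noncomputable def gc01 (N : ℕ) (Θ : Matrix (Fin n₁) (Fin n) ℝ)
    (Θ₂ : Matrix (Fin n₁) (Fin 1) ℝ) (L2 : Matrix (Fin n) (Fin n) ℝ) :
    Matrix (Fin n) (Fin 1) ℝ :=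
  (1 / (N : ℝ)) • (Θᵀ * p.B0ᵀ * L2 * (p.D0 - p.B0 * Θ₂) + L2 * p.B * Θ₂)

/-- ǧ₀₂. -/
noncomputable def gc02 (N : ℕ) (Θ₁ : Matrix (Fin n₁) (Fin n) ℝ)
    (Θ₂ : Matrix (Fin n₁) (Fin 1) ℝ) (L2 : Matrix (Fin n) (Fin n) ℝ) :
    Matrix (Fin n) (Fin 1) ℝ :=
  (1 / (N : ℝ)) • (-(Θ₁ᵀ * p.B0ᵀ * L2 * p.B0 * Θ₂) + Θ₁ᵀ * p.B0ᵀ * L2 * p.D0)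

/-- RHS of (ODE-Λ̌₁^N) (paper's −dΛ̌₁^N/dt). -/
noncomputable def check1RHS (N : ℕ) (Θ : Matrix (Fin n₁) (Fin n) ℝ)
    (L1 L2 : Matrix (Fin n) (Fin n) ℝ) : Matrix (Fin n) (Fin n) ℝ :=
  Θᵀ * p.R1 L1 * Θ + L1 * (p.A - p.B * Θ) + (p.A - p.B * Θ)ᵀ * L1 + p.Q
    + p.gc1 N Θ L1 L2

/-- RHS of (ODE-Λ̌₂^N). -/
noncomputable def check2RHS (N : ℕ) (Θ : Matrix (Fin n₁) (Fin n) ℝ)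
    (L1 L2 : Matrix (Fin n) (Fin n) ℝ) : Matrix (Fin n) (Fin n) ℝ :=
  Θᵀ * p.B0ᵀ * (L1 + L2) * p.B0 * Θ + L1 * p.G + p.Gᵀ * L1
    + L2 * (p.A + p.G - p.B * Θ) + (p.A + p.G - p.B * Θ)ᵀ * L2 + p.QΓ
    + p.gc2 N Θ L2

/-- RHS of (ODE-Λ̌₁₂^N). -/
noncomputable def check12RHS (N : ℕ) (Θ Θ₁ : Matrix (Fin n₁) (Fin n) ℝ)
    (L1 L2 L12 : Matrix (Fin n) (Fin n) ℝ) : Matrix (Fin n) (Fin n) ℝ :=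
  Θᵀ * p.R2 L1 L2 * Θ₁ + Θᵀ * p.B0ᵀ * L12 * p.B0 * (Θ + Θ₁)
    - (L1 + L2) * p.B * Θ₁
    + (p.A + p.G - p.B * Θ)ᵀ * L12
    + L12 * (p.A + p.G - p.B * (Θ₁ + Θ))
    + p.gc12 N Θ Θ₁ L2

/-- RHS of (ODE-Λ̌₂₂^N). -/
noncomputable def check22RHS (N : ℕ) (Θ₁ : Matrix (Fin n₁) (Fin n) ℝ)
    (Z₀ Z₁ : Matrix (Fin n) (Fin n) ℝ)
    (L1 L2 L12 L22 : Matrix (Fin n) (Fin n) ℝ) : Matrix (Fin n) (Fin n) ℝ :=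
  Θ₁ᵀ * p.R2 L1 L2 * Θ₁ - L12ᵀ * p.B * Θ₁ - Θ₁ᵀ * p.Bᵀ * L12
    + L22 * Z₁ + Z₁ᵀ * L22
    - Z₀ᵀ * L12ᵀ * p.B0 * Θ₁ - Θ₁ᵀ * p.B0ᵀ * L12 * Z₀
    + Z₀ᵀ * L22 * Z₀ + p.gc22 N Θ₁ L2

/-- RHS of (ODE-Š₁^N). -/
noncomputable def checkS1RHS (N : ℕ) (Θ : Matrix (Fin n₁) (Fin n) ℝ)
    (Θ₂ : Matrix (Fin n₁) (Fin 1) ℝ) (L1 L2 L12 : Matrix (Fin n) (Fin n) ℝ)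
    (S1 : Matrix (Fin n) (Fin 1) ℝ) : Matrix (Fin n) (Fin 1) ℝ :=
  Θᵀ * p.R2 L1 L2 * Θ₂ - (L1 + L2 + L12) * p.B * Θ₂
    - Θᵀ * (p.Bᵀ * S1 + p.B1ᵀ * L1 * p.D + p.B0ᵀ * (L1 + L2) * p.D0)
    - Θᵀ * p.B0ᵀ * L12 * (p.D0 - p.B0 * Θ₂)
    + (p.A + p.G)ᵀ * S1
    + p.gc01 N Θ Θ₂ L2

/-- RHS of (ODE-Š₂^N). -/
noncomputable def checkS2RHS (N : ℕ) (Θ₁ : Matrix (Fin n₁) (Fin n) ℝ)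
    (Θ₂ : Matrix (Fin n₁) (Fin 1) ℝ) (Z₀ Z₁ : Matrix (Fin n) (Fin n) ℝ)
    (L1 L2 L12 L22 : Matrix (Fin n) (Fin n) ℝ)
    (S1 S2 : Matrix (Fin n) (Fin 1) ℝ) : Matrix (Fin n) (Fin 1) ℝ :=
  Θ₁ᵀ * p.R2 L1 L2 * Θ₂ + Z₁ᵀ * S2
    - Θ₁ᵀ * (p.Bᵀ * S1 + p.B1ᵀ * L1 * p.D + p.B0ᵀ * (L1 + L2) * p.D0)
    + (Z₀ᵀ * L22 + Z₀ᵀ * L12ᵀ - Θ₁ᵀ * p.B0ᵀ * L12) * (p.D0 - p.B0 * Θ₂)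
    - (L12ᵀ + L22) * p.B * Θ₂
    + p.gc02 N Θ₁ Θ₂ L2

/-- Solution of the pair (ODE-Λ̌₁^N)–(ODE-Λ̌₂^N) on [0,T], with Θ(t) from the limiting Λ₁. -/
noncomputable def IsSolCheckA (N : ℕ) (Λ₁ : ℝ → Matrix (Fin n) (Fin n) ℝ)
    (L1 L2 : ℝ → Matrix (Fin n) (Fin n) ℝ) : Prop :=
  L1 p.T = p.Qf + (1 / (N : ℝ)) • p.QfΓ ∧ L2 p.T = p.QfΓ ∧
  (∀ t ∈ Icc (0 : ℝ) p.T, ∀ i j, HasDerivWithinAt (fun s => L1 s i j)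
    ((-(p.check1RHS N (p.Theta (Λ₁ t)) (L1 t) (L2 t))) i j) (Icc (0 : ℝ) p.T) t) ∧
  (∀ t ∈ Icc (0 : ℝ) p.T, ∀ i j, HasDerivWithinAt (fun s => L2 s i j)
    ((-(p.check2RHS N (p.Theta (Λ₁ t)) (L1 t) (L2 t))) i j) (Icc (0 : ℝ) p.T) t)

/-- Solution of (ODE-Λ̌₁^N)–(ODE-Λ̌₂₂^N) on [0,T], with Θ, Θ₁, Z₀, Z₁ from the limiting (Λ₁, Λ₂). -/
noncomputable def IsSolCheckB (N : ℕ) (Λ₁ Λ₂ : ℝ → Matrix (Fin n) (Fin n) ℝ)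
    (L1 L2 L12 L22 : ℝ → Matrix (Fin n) (Fin n) ℝ) : Prop :=
  p.IsSolCheckA N Λ₁ L1 L2 ∧
  L12 p.T = 0 ∧ L22 p.T = 0 ∧
  (∀ t ∈ Icc (0 : ℝ) p.T, ∀ i j, HasDerivWithinAt (fun s => L12 s i j)
    ((-(p.check12RHS N (p.Theta (Λ₁ t)) (p.Theta1 (Λ₁ t) (Λ₂ t))
        (L1 t) (L2 t) (L12 t))) i j) (Icc (0 : ℝ) p.T) t) ∧
  (∀ t ∈ Icc (0 : ℝ) p.T, ∀ i j, HasDerivWithinAt (fun s => L22 s i j)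
    ((-(p.check22RHS N (p.Theta1 (Λ₁ t) (Λ₂ t)) (p.Z0 (Λ₁ t) (Λ₂ t))
        (p.Z1 (Λ₁ t) (Λ₂ t)) (L1 t) (L2 t) (L12 t) (L22 t))) i j) (Icc (0 : ℝ) p.T) t)

/-- Solution of the full decentralized coefficient system on [0,T],
with Θ, Θ₁, Θ₂, Z₀, Z₁ from the limiting (Λ₁, Λ₂, S). -/
noncomputable def IsSolCheckC (N : ℕ) (Λ₁ Λ₂ : ℝ → Matrix (Fin n) (Fin n) ℝ)
    (S : ℝ → Matrix (Fin n) (Fin 1) ℝ)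
    (L1 L2 L12 L22 : ℝ → Matrix (Fin n) (Fin n) ℝ)
    (S1 S2 : ℝ → Matrix (Fin n) (Fin 1) ℝ) : Prop :=
  p.IsSolCheckB N Λ₁ Λ₂ L1 L2 L12 L22 ∧
  S1 p.T = 0 ∧ S2 p.T = 0 ∧
  (∀ t ∈ Icc (0 : ℝ) p.T, ∀ i j, HasDerivWithinAt (fun s => S1 s i j)
    ((-(p.checkS1RHS N (p.Theta (Λ₁ t)) (p.Theta2 (Λ₁ t) (Λ₂ t) (S t))
        (L1 t) (L2 t) (L12 t) (S1 t))) i j) (Icc (0 : ℝ) p.T) t) ∧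
  (∀ t ∈ Icc (0 : ℝ) p.T, ∀ i j, HasDerivWithinAt (fun s => S2 s i j)
    ((-(p.checkS2RHS N (p.Theta1 (Λ₁ t) (Λ₂ t)) (p.Theta2 (Λ₁ t) (Λ₂ t) (S t))
        (p.Z0 (Λ₁ t) (Λ₂ t)) (p.Z1 (Λ₁ t) (Λ₂ t))
        (L1 t) (L2 t) (L12 t) (L22 t) (S1 t) (S2 t))) i j) (Icc (0 : ℝ) p.T) t)

end Params

/-! ### Auxiliary general ODE lemmas -/

section ODEUtil

open Metric

variable {E : Type*} [NormedAddCommGroup E] [NormedSpace ℝ E]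

/-- Uniqueness for a terminal value problem with uniformly Lipschitz RHS. -/
theorem ode_term_unique (v : ℝ → E → E) (a b : ℝ) (K : NNReal)
    (hv : ∀ t ∈ Icc a b, LipschitzWith K (v t))
    {f g : ℝ → E}
    (hf : ∀ t ∈ Icc a b, HasDerivWithinAt f (v t (f t)) (Icc a b) t)
    (hg : ∀ t ∈ Icc a b, HasDerivWithinAt g (v t (g t)) (Icc a b) t)
    (hb : f b = g b) : ∀ t ∈ Icc a b, f t = g t := by
  intro t ht
  have hab : a ≤ b := le_trans ht.1 ht.2
  set v' : ℝ → E → E := fun t x => v (max a (min b t)) x with hv'def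
  have hv' : ∀ s : ℝ, LipschitzOnWith K (v' s) univ := by
    intro s
    exact (hv _ ⟨le_max_left _ _, max_le hab (min_le_left _ _)⟩).lipschitzOnWith
  have key : ∀ (h : ℝ → E), (∀ u ∈ Icc a b, HasDerivWithinAt h (v u (h u)) (Icc a b) u) →
      ∀ u ∈ Ioc a b, HasDerivWithinAt h (v' u (h u)) (Iic u) u := by
    intro h hh u hu
    have hueq : max a (min b u) = u := by
      rw [min_eq_right hu.2, max_eq_right hu.1.le]
    have h1 : HasDerivWithinAt h (v u (h u)) (Icc a u) u :=
      (hh u ⟨hu.1.le, hu.2⟩).mono (Icc_subset_Icc_right hu.2)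
    have h2 : Icc a u ∈ nhdsWithin u (Iic u) := by
      apply mem_nhdsWithin.mpr
      exact ⟨Ioi a, isOpen_Ioi, hu.1, fun y hy => ⟨hy.1.le, hy.2⟩⟩
    have := h1.mono_of_mem_nhdsWithin h2
    simpa [hv'def, hueq] using this
  have := ODE_solution_unique_of_mem_Icc_left (v := v') (s := fun _ => univ) (K := K)
    (fun s _ => hv' s)
    (fun u hu => (hf u hu).continuousWithinAt)
    (key f hf) (fun _ _ => mem_univ _)
    (fun u hu => (hg u hu).continuousWithinAt)
    (key g hg) (fun _ _ => mem_univ _) hb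
  exact this ht

/-- Local existence for a globally Lipschitz RHS. -/
theorem ode_exist_local [CompleteSpace E] (v : ℝ → E → E) (a b : ℝ) (K : NNReal)
    (hv : ∀ t ∈ Icc a b, LipschitzWith K (v t))
    (hcont : ∀ x, ContinuousOn (fun t => v t x) (Icc a b))
    (tmin t₀ tmax : ℝ) (ht₀ : t₀ ∈ Icc tmin tmax) (hsub : Icc tmin tmax ⊆ Icc a b)
    (hK : (K : ℝ) * max (tmax - t₀) (t₀ - tmin) ≤ 1/2)
    (x₀ : E) :
    ∃ f : ℝ → E, f t₀ = x₀ ∧ ∀ t ∈ Icc tmin tmax,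
      HasDerivWithinAt f (v t (f t)) (Icc tmin tmax) t := by
  obtain ⟨C₀, hC₀⟩ := isCompact_Icc.exists_bound_of_continuousOn (hcont x₀)
  set M := max C₀ 0 with hMdef
  have hM0 : 0 ≤ M := le_max_right _ _
  have hM : ∀ t ∈ Icc a b, ‖v t x₀‖ ≤ M := fun t ht => (hC₀ t ht).trans (le_max_left _ _)
  set τ := max (tmax - t₀) (t₀ - tmin) with hτdef
  have hτ0 : 0 ≤ τ := le_trans (by linarith [ht₀.2]) (le_max_left _ _)
  set R := 2 * M * τ with hRdef
  have hR0 : 0 ≤ R := by positivity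
  have hpl : IsPicardLindelof v (tmin := tmin) (tmax := tmax) ⟨t₀, ht₀⟩ x₀ ⟨R, hR0⟩ 0
      ⟨M + K * R, by positivity⟩ K := by
    constructor
    · exact fun t ht => (hv t (hsub ht)).lipschitzOnWith
    · exact fun x _ => (hcont x).mono hsub
    · intro t ht x hx
      show ‖v t x‖ ≤ M + K * R
      have h1 : dist (v t x) (v t x₀) ≤ K * dist x x₀ := (hv t (hsub ht)).dist_le_mul x x₀
      have h2 : dist x x₀ ≤ R := mem_closedBall.mp hx
      have h3 : ‖v t x‖ ≤ dist (v t x) (v t x₀) + ‖v t x₀‖ := by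
        rw [dist_eq_norm]
        simpa using norm_add_le (v t x - v t x₀) (v t x₀)
      have h4 := hM t (hsub ht)
      have hK0 : (0:ℝ) ≤ K := K.2
      nlinarith [mul_le_mul_of_nonneg_left h2 hK0]
    · show (M + K * R) * max (tmax - t₀) (t₀ - tmin) ≤ R - ((0 : NNReal) : ℝ)
      rw [NNReal.coe_zero, sub_zero]
      have hKτ : (K:ℝ) * τ ≤ 1/2 := hK
      have hMτ : 0 ≤ M * τ := mul_nonneg hM0 hτ0
      have : (M * τ) * ((K:ℝ) * τ) ≤ (M*τ) * (1/2) := mul_le_mul_of_nonneg_left hKτ hMτ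
      rw [hRdef]
      nlinarith
  obtain ⟨f, hf0, hf⟩ := hpl.exists_eq_forall_mem_Icc_hasDerivWithinAt₀
  exact ⟨f, hf0, hf⟩

/-- Global existence for a terminal value problem with uniformly Lipschitz RHS. -/
theorem ode_term_exist [CompleteSpace E] (v : ℝ → E → E) (a b : ℝ) (hab : a ≤ b) (K : NNReal)
    (hv : ∀ t ∈ Icc a b, LipschitzWith K (v t))
    (hcont : ∀ x, ContinuousOn (fun t => v t x) (Icc a b)) (x₀ : E) :
    ∃ f : ℝ → E, f b = x₀ ∧ ∀ t ∈ Icc a b, HasDerivWithinAt f (v t (f t)) (Icc a b) t := by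
  set δ : ℝ := (1/2) / ((K : ℝ) + 1) with hδdef
  have hK1 : (0:ℝ) < (K:ℝ) + 1 := by positivity
  have hδ : 0 < δ := by positivity
  have hKδ : (K:ℝ) * δ ≤ 1/2 := by
    rw [hδdef, mul_div_assoc']
    rw [div_le_iff₀ hK1]
    nlinarith [K.2]
  have main : ∀ k : ℕ, ∃ f : ℝ → E, f b = x₀ ∧ ∀ t ∈ Icc (max a (b - k * δ)) b,
      HasDerivWithinAt f (v t (f t)) (Icc (max a (b - k * δ)) b) t := by
    intro k
    induction k with
    | zero =>
      have hmax : max a (b - (0:ℕ) * δ) = b := by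
        simp [max_eq_right hab]
      rw [hmax]
      obtain ⟨f, hf0, hf⟩ := ode_exist_local v a b K hv hcont b b b
        ⟨le_rfl, le_rfl⟩ (Icc_subset_Icc hab le_rfl)
        (by simp) x₀
      exact ⟨f, hf0, hf⟩
    | succ k ih =>
      obtain ⟨f, hfb, hf⟩ := ih
      set s : ℝ := max a (b - k * δ) with hsdef
      set s' : ℝ := max a (b - (k+1 : ℕ) * δ) with hs'def
      have hs's : s' ≤ s := by
        apply max_le_max le_rfl
        push_cast
        nlinarith
      have hsb : s ≤ b := max_le hab (by nlinarith [k.cast_nonneg (α := ℝ)])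
      have hs'a : a ≤ s' := le_max_left _ _
      have hsa : a ≤ s := le_max_left _ _
      have hss' : s - s' ≤ δ := by
        have h1 : s ≤ s' + δ := by
          apply max_le
          · linarith
          · have : b - k * δ = (b - (k+1:ℕ) * δ) + δ := by push_cast; ring
            rw [this]
            exact add_le_add (le_max_right _ _) le_rfl
        linarith
      obtain ⟨g, hgs, hg⟩ := ode_exist_local v a b K hv hcont s' s s
        ⟨hs's, le_refl s⟩ (Icc_subset_Icc hs'a hsb)
        (by
          have : max (s - s) (s - s') = s - s' := by
            rw [max_eq_right]; linarith
          rw [this]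
          calc (K:ℝ) * (s - s') ≤ (K:ℝ) * δ := by
                apply mul_le_mul_of_nonneg_left hss' K.2
            _ ≤ 1/2 := hKδ)
        (f s)
      refine ⟨fun t => if t < s then g t else f t, ?_, ?_⟩
      · show (if b < s then g b else f b) = x₀
        rw [if_neg (not_lt.mpr hsb)]
        exact hfb
      · intro t ht
        set h : ℝ → E := fun t => if t < s then g t else f t with hhdef
        have hgh : ∀ y ∈ Icc s' s, h y = g y := by
          intro y hy
          by_cases hc : y < s
          · simp [hhdef, hc]
          · have : y = s := le_antisymm hy.2 (not_lt.mp hc)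
            simp [hhdef, hc, this, hgs]
        have hfh : ∀ y ∈ Icc s b, h y = f y := by
          intro y hy
          have : ¬ y < s := not_lt.mpr hy.1
          simp [hhdef, this]
        have hA : ∀ u ∈ Icc s' s, HasDerivWithinAt h (v u (h u)) (Icc s' s) u := by
          intro u hu
          rw [hgh u hu]
          exact (hg u hu).congr hgh (hgh u hu)
        have hB : ∀ u ∈ Icc s b, HasDerivWithinAt h (v u (h u)) (Icc s b) u := by
          intro u hu
          rw [hfh u hu]
          exact (hf u hu).congr hfh (hfh u hu)
        have hset : Icc s' s ∪ Icc s b = Icc s' b := Icc_union_Icc_eq_Icc hs's hsb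
        rcases lt_trichotomy t s with h1 | h1 | h1
        · have hu : t ∈ Icc s' s := ⟨ht.1, h1.le⟩
          apply (hA t hu).mono_of_mem_nhdsWithin
          apply mem_nhdsWithin.mpr
          exact ⟨Iio s, isOpen_Iio, h1, fun y hy => ⟨hy.2.1, hy.1.le⟩⟩
        · rw [← hset, h1]
          rw [h1] at ht
          exact (hA s ⟨ht.1, le_rfl⟩).union (hB s ⟨le_rfl, ht.2⟩)
        · have hu : t ∈ Icc s b := ⟨h1.le, ht.2⟩
          apply (hB t hu).mono_of_mem_nhdsWithin
          apply mem_nhdsWithin.mpr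
          exact ⟨Ioi s, isOpen_Ioi, h1, fun y hy => ⟨hy.1.le, hy.2.2⟩⟩
  obtain ⟨k, hk⟩ := exists_nat_ge ((b - a)/δ)
  obtain ⟨f, hfb, hf⟩ := main k
  have hmax : max a (b - k * δ) = a := by
    apply max_eq_left
    have : b - a ≤ k * δ := by
      rw [div_le_iff₀ hδ] at hk
      linarith
    linarith
  rw [hmax] at hf
  exact ⟨f, hfb, hf⟩

end ODEUtil

/-! ### Matrix analysis helpers -/

section MatrixAux

attribute [local instance] Matrix.normedAddCommGroup Matrix.normedSpace

lemma hasDerivWithinAt_pi_iff {ι : Type*} [Fintype ι] {F : ι → Type*}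
    [∀ i, NormedAddCommGroup (F i)] [∀ i, NormedSpace ℝ (F i)]
    {f : ℝ → ∀ i, F i} {f' : ∀ i, F i} {s : Set ℝ} {x : ℝ} :
    HasDerivWithinAt f f' s x ↔ ∀ i, HasDerivWithinAt (fun t => f t i) (f' i) s x := by
  have key : ∀ i, (ContinuousLinearMap.proj (R := ℝ) (φ := F) i).comp
      (ContinuousLinearMap.toSpanSingleton ℝ f') = ContinuousLinearMap.toSpanSingleton ℝ (f' i) := by
    intro i; ext r; simp
  rw [hasDerivWithinAt_iff_hasFDerivWithinAt, hasFDerivWithinAt_pi']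
  refine forall_congr' fun i => ?_
  rw [hasDerivWithinAt_iff_hasFDerivWithinAt, key i]

lemma hasDerivWithinAt_matrix {m l : Type*} [Fintype m] [Fintype l]
    {f : ℝ → Matrix m l ℝ} {f' : Matrix m l ℝ} {s : Set ℝ} {x : ℝ} :
    HasDerivWithinAt f f' s x ↔ ∀ i j, HasDerivWithinAt (fun t => f t i j) (f' i j) s x := by
  refine (hasDerivWithinAt_pi_iff (f := f)).trans ?_
  exact forall_congr' fun i => hasDerivWithinAt_pi_iff

variable {X : Type*} [TopologicalSpace X]

lemma _root_.ContinuousOn.mmul {m k l : Type*} [Fintype k]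
    {A : X → Matrix m k ℝ} {B : X → Matrix k l ℝ} {s : Set X}
    (hA : ContinuousOn A s) (hB : ContinuousOn B s) :
    ContinuousOn (fun x => A x * B x) s := by
  rw [continuousOn_iff_continuous_restrict] at *
  exact Continuous.matrix_mul hA hB

lemma _root_.ContinuousOn.mtrans {m l : Type*} {A : X → Matrix m l ℝ} {s : Set X}
    (hA : ContinuousOn A s) : ContinuousOn (fun x => (A x)ᵀ) s :=
  (Continuous.matrix_transpose continuous_id).comp_continuousOn hA

lemma _root_.ContinuousOn.matrix_inv {k : Type*} [Fintype k] [DecidableEq k]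
    {A : X → Matrix k k ℝ} {s : Set X} (hA : ContinuousOn A s)
    (h : ∀ x ∈ s, (A x).det ≠ 0) : ContinuousOn (fun x => (A x)⁻¹) s := by
  have heq : ∀ x ∈ s, (A x)⁻¹ = ((A x).det)⁻¹ • (A x).adjugate := by
    intro x hx
    rw [Matrix.inv_def, Ring.inverse_eq_inv']
  apply ContinuousOn.congr ?_ heq
  apply ContinuousOn.fun_smul
  · exact ((Continuous.matrix_det continuous_id).comp_continuousOn hA).inv₀ h
  · exact (Continuous.matrix_adjugate continuous_id).comp_continuousOn hA

lemma continuousOn_matrix {m l : Type*} {A : X → Matrix m l ℝ} {s : Set X}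
    (h : ∀ i j, ContinuousOn (fun x => A x i j) s) : ContinuousOn A s := by
  rw [continuousOn_iff_continuous_restrict]
  exact continuous_matrix fun i j => continuousOn_iff_continuous_restrict.mp (h i j)

lemma matrix_continuousOn_entry {m l : Type*} {A : X → Matrix m l ℝ} {s : Set X}
    (h : ContinuousOn A s) (i : m) (j : l) : ContinuousOn (fun x => A x i j) s := by
  have hc : Continuous (fun M : Matrix m l ℝ => M i j) :=
    (continuous_apply j).comp (continuous_apply i)
  exact hc.comp_continuousOn h

lemma norm_mmul_le {m k l : Type*} [Fintype m] [Fintype k] [Fintype l]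
    (A : Matrix m k ℝ) (B : Matrix k l ℝ) :
    ‖A * B‖ ≤ (Fintype.card k : ℝ) * ‖A‖ * ‖B‖ := by
  have h0 : (0:ℝ) ≤ (Fintype.card k : ℝ) * ‖A‖ * ‖B‖ := by positivity
  rw [Matrix.norm_le_iff h0]
  intro i j
  calc ‖(A*B) i j‖ = ‖∑ c, A i c * B c j‖ := by rw [Matrix.mul_apply]
    _ ≤ ∑ c, ‖A i c * B c j‖ := norm_sum_le _ _
    _ ≤ ∑ _c : k, ‖A‖ * ‖B‖ := by
        refine Finset.sum_le_sum fun c _ => ?_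
        rw [norm_mul]
        exact mul_le_mul (Matrix.norm_entry_le_entrywise_sup_norm A)
          (Matrix.norm_entry_le_entrywise_sup_norm B) (norm_nonneg _) (norm_nonneg _)
    _ = (Fintype.card k : ℝ) * ‖A‖ * ‖B‖ := by
        rw [Finset.sum_const, Finset.card_univ, nsmul_eq_mul]; ring

lemma contOn_of_hasDeriv {m l : Type*} [Fintype m] [Fintype l]
    {F D : ℝ → Matrix m l ℝ} {s : Set ℝ}
    (h : ∀ t ∈ s, ∀ i j, HasDerivWithinAt (fun u => F u i j) (D t i j) s t) :
    ContinuousOn F s :=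
  continuousOn_matrix fun i j t ht => (h t ht i j).continuousWithinAt

lemma submatrix_sum {α β l' o' m' n' : Type*} [AddCommMonoid α] (s : Finset β)
    (f : β → Matrix m' n' α) (r : l' → m') (c : o' → n') :
    (∑ i ∈ s, f i).submatrix r c = ∑ i ∈ s, (f i).submatrix r c := by
  ext i j
  simp [Matrix.sum_apply]

end MatrixAux

/-! ### Permutation of block indices -/

/-- Permuting the block (agent) index. -/
def pe {N : ℕ} (σ : Equiv.Perm (Fin N)) (a : ℕ) : (Fin N × Fin a) ≃ (Fin N × Fin a) :=
  σ.prodCongr (Equiv.refl _)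

@[simp] lemma pe_apply {N a : ℕ} (σ : Equiv.Perm (Fin N)) (x : Fin N × Fin a) :
    pe σ a x = (σ x.1, x.2) := rfl

namespace Params

section Conj

variable {n n₁ : ℕ} (p : Params n n₁) {N : ℕ} (σ : Equiv.Perm (Fin N))

lemma kron_conj {a b : ℕ} (M : Matrix (Fin a) (Fin b) ℝ) :
    (kronIN N M).submatrix ⇑(pe σ a) ⇑(pe σ b) = kronIN N M := by
  ext x y
  simp [kronIN, Matrix.submatrix_apply, EmbeddingLike.apply_eq_iff_eq]

lemma stackN_conj {a b : ℕ} (M : Matrix (Fin a) (Fin b) ℝ) :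
    (stackN N M).submatrix ⇑(pe σ a) _root_.id = stackN N M := by
  ext x y
  simp [stackN, Matrix.submatrix_apply]

lemma bigA_conj : (p.bigA N).submatrix ⇑(pe σ n) ⇑(pe σ n) = p.bigA N := by
  ext x y
  simp [Params.bigA, Matrix.submatrix_apply, EmbeddingLike.apply_eq_iff_eq]

lemma bigQ_conj : (p.bigQ N).submatrix ⇑(pe σ n) ⇑(pe σ n) = p.bigQ N := by
  ext x y
  simp [Params.bigQ, Matrix.submatrix_apply, EmbeddingLike.apply_eq_iff_eq]

lemma bigQf_conj : (p.bigQf N).submatrix ⇑(pe σ n) ⇑(pe σ n) = p.bigQf N := by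
  ext x y
  simp [Params.bigQf, Matrix.submatrix_apply, EmbeddingLike.apply_eq_iff_eq]

lemma bigR_conj : (p.bigR N).submatrix ⇑(pe σ n₁) ⇑(pe σ n₁) = p.bigR N := by
  ext x y
  simp [Params.bigR, Matrix.submatrix_apply, EmbeddingLike.apply_eq_iff_eq]

lemma bigBhat_conj : (p.bigBhat N).submatrix ⇑(pe σ n) ⇑(pe σ n₁) = p.bigBhat N := by
  ext x y
  simp [Params.bigBhat, Matrix.submatrix_apply, EmbeddingLike.apply_eq_iff_eq]

lemma bigB0_conj : (p.bigB0 N).submatrix ⇑(pe σ n) _root_.id = p.bigB0 N := by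
  ext x y
  simp [Params.bigB0, Matrix.submatrix_apply]

lemma bigIhat_conj : (p.bigIhat N).submatrix _root_.id ⇑(pe σ n₁) = p.bigIhat N := by
  ext x y
  simp [Params.bigIhat, Matrix.submatrix_apply]

lemma bigE_conj (i : Fin N) :
    (p.bigE N (σ i)).submatrix _root_.id ⇑(pe σ n₁) = p.bigE N i := by
  ext k y
  simp [Params.bigE, Matrix.submatrix_apply, EmbeddingLike.apply_eq_iff_eq]

lemma bigB_conj (i : Fin N) :
    (p.bigB N (σ i)).submatrix ⇑(pe σ n) _root_.id = p.bigB N i := by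
  ext x y
  simp [Params.bigB, Matrix.submatrix_apply, EmbeddingLike.apply_eq_iff_eq]

lemma M2_conj (Z : Matrix (Fin N × Fin n) (Fin N × Fin n) ℝ) :
    p.M2 N (Z.submatrix ⇑(pe σ n) ⇑(pe σ n))
      = (p.M2 N Z).submatrix ⇑(pe σ n₁) ⇑(pe σ n₁) := by
  have hid1 : (_root_.id : Fin n₁ → Fin n₁) = ⇑(Equiv.refl (Fin n₁)) := rfl
  have hterm : ∀ i : Fin N,
      (p.bigE N i)ᵀ * (p.bigB N i)ᵀ * (Z.submatrix ⇑(pe σ n) ⇑(pe σ n)) * p.bigB N i *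
        p.bigE N i
      = ((p.bigE N (σ i))ᵀ * (p.bigB N (σ i))ᵀ * Z * p.bigB N (σ i) *
          p.bigE N (σ i)).submatrix ⇑(pe σ n₁) ⇑(pe σ n₁) := by
    intro i
    conv_lhs => rw [← p.bigE_conj σ i, ← p.bigB_conj σ i]
    rw [Matrix.transpose_submatrix, Matrix.transpose_submatrix, hid1]
    simp only [Matrix.submatrix_mul_equiv]
  have hterm2 :
      (p.bigIhat N)ᵀ * (p.bigB0 N)ᵀ * (Z.submatrix ⇑(pe σ n) ⇑(pe σ n)) * p.bigB0 N *
        p.bigIhat N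
      = ((p.bigIhat N)ᵀ * (p.bigB0 N)ᵀ * Z * p.bigB0 N * p.bigIhat N).submatrix
          ⇑(pe σ n₁) ⇑(pe σ n₁) := by
    conv_lhs => rw [← p.bigIhat_conj σ, ← p.bigB0_conj σ]
    rw [Matrix.transpose_submatrix, Matrix.transpose_submatrix, hid1]
    simp only [Matrix.submatrix_mul_equiv]
  unfold Params.M2
  rw [Finset.sum_congr rfl (fun i _ => hterm i), hterm2]
  rw [Fintype.sum_equiv σ _
    (fun j => ((p.bigE N j)ᵀ * (p.bigB N j)ᵀ * Z * p.bigB N j * p.bigE N j).submatrix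
      ⇑(pe σ n₁) ⇑(pe σ n₁)) (fun i => rfl)]
  rw [← submatrix_sum]
  rfl

lemma Pcheck1RHS_conj (Θ : Matrix (Fin n₁) (Fin n) ℝ)
    (Z : Matrix (Fin N × Fin n) (Fin N × Fin n) ℝ) :
    p.Pcheck1RHS N Θ (Z.submatrix ⇑(pe σ n) ⇑(pe σ n))
      = (p.Pcheck1RHS N Θ Z).submatrix ⇑(pe σ n) ⇑(pe σ n) := by
  have hBK : (p.bigBhat N * kronIN N Θ).submatrix ⇑(pe σ n) ⇑(pe σ n)
      = p.bigBhat N * kronIN N Θ := by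
    rw [Matrix.submatrix_mul _ _ ⇑(pe σ n) ⇑(pe σ n₁) ⇑(pe σ n) (pe σ n₁).bijective,
      p.bigBhat_conj σ, kron_conj σ]
  have hC : (p.bigA N - p.bigBhat N * kronIN N Θ).submatrix ⇑(pe σ n) ⇑(pe σ n)
      = p.bigA N - p.bigBhat N * kronIN N Θ := by
    have h := congrFun (congrFun (Matrix.submatrix_sub (p.bigA N)
      (p.bigBhat N * kronIN N Θ)) ⇑(pe σ n)) ⇑(pe σ n)
    rw [h, Pi.sub_apply, Pi.sub_apply]
    rw [p.bigA_conj σ, hBK]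
  have h2Z : (2:ℝ) • Z.submatrix ⇑(pe σ n) ⇑(pe σ n)
      = ((2:ℝ) • Z).submatrix ⇑(pe σ n) ⇑(pe σ n) := rfl
  unfold Params.Pcheck1RHS
  rw [h2Z, p.M2_conj σ]
  have h1 : (kronIN N Θ)ᵀ *
        (p.bigR N + (p.M2 N ((2:ℝ) • Z)).submatrix ⇑(pe σ n₁) ⇑(pe σ n₁)) * kronIN N Θ
      = ((kronIN N Θ)ᵀ * (p.bigR N + p.M2 N ((2:ℝ) • Z)) * kronIN N Θ).submatrix
          ⇑(pe σ n) ⇑(pe σ n) := by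
    conv_lhs => rw [← p.bigR_conj σ, ← kron_conj σ Θ]
    rw [Matrix.transpose_submatrix]
    rw [show (p.bigR N).submatrix ⇑(pe σ n₁) ⇑(pe σ n₁) +
        (p.M2 N ((2:ℝ) • Z)).submatrix ⇑(pe σ n₁) ⇑(pe σ n₁)
      = (p.bigR N + p.M2 N ((2:ℝ) • Z)).submatrix ⇑(pe σ n₁) ⇑(pe σ n₁) from rfl]
    simp only [Matrix.submatrix_mul_equiv]
  have h2 : Z.submatrix ⇑(pe σ n) ⇑(pe σ n) * (p.bigA N - p.bigBhat N * kronIN N Θ)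
      = (Z * (p.bigA N - p.bigBhat N * kronIN N Θ)).submatrix ⇑(pe σ n) ⇑(pe σ n) := by
    conv_lhs => rw [← hC]
    simp only [Matrix.submatrix_mul_equiv]
  have h3 : (p.bigA N - p.bigBhat N * kronIN N Θ)ᵀ * Z.submatrix ⇑(pe σ n) ⇑(pe σ n)
      = ((p.bigA N - p.bigBhat N * kronIN N Θ)ᵀ * Z).submatrix ⇑(pe σ n) ⇑(pe σ n) := by
    conv_lhs => rw [← hC]
    rw [Matrix.transpose_submatrix]
    simp only [Matrix.submatrix_mul_equiv]
  rw [h1, h2, h3]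
  conv_lhs => rw [← p.bigQ_conj σ]
  rfl

lemma Pcheck12RHS_conj (L1m L2m : Matrix (Fin n) (Fin n) ℝ)
    (Z : Matrix (Fin N × Fin n) (Fin N × Fin n) ℝ)
    (W : Matrix (Fin N × Fin n) (Fin n) ℝ) :
    p.Pcheck12RHS N L1m L2m (Z.submatrix ⇑(pe σ n) ⇑(pe σ n))
        (W.submatrix ⇑(pe σ n) _root_.id)
      = (p.Pcheck12RHS N L1m L2m Z W).submatrix ⇑(pe σ n) _root_.id := by
  have hidn : (_root_.id : Fin n → Fin n) = ⇑(Equiv.refl (Fin n)) := rfl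
  have hidn1 : (_root_.id : Fin n₁ → Fin n₁) = ⇑(Equiv.refl (Fin n₁)) := rfl
  have hBK : (p.bigBhat N * kronIN N (p.Theta L1m)).submatrix ⇑(pe σ n) ⇑(pe σ n)
      = p.bigBhat N * kronIN N (p.Theta L1m) := by
    rw [Matrix.submatrix_mul _ _ ⇑(pe σ n) ⇑(pe σ n₁) ⇑(pe σ n) (pe σ n₁).bijective,
      p.bigBhat_conj σ, kron_conj σ]
  have h2Z : (2:ℝ) • Z.submatrix ⇑(pe σ n) ⇑(pe σ n)
      = ((2:ℝ) • Z).submatrix ⇑(pe σ n) ⇑(pe σ n) := rfl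
  unfold Params.Pcheck12RHS
  rw [h2Z, p.M2_conj σ]
  have h1 : (kronIN N (p.Theta L1m))ᵀ *
        (p.bigR N + (p.M2 N ((2:ℝ) • Z)).submatrix ⇑(pe σ n₁) ⇑(pe σ n₁)) *
        stackN N (p.Theta1 L1m L2m)
      = ((kronIN N (p.Theta L1m))ᵀ * (p.bigR N + p.M2 N ((2:ℝ) • Z)) *
          stackN N (p.Theta1 L1m L2m)).submatrix ⇑(pe σ n) _root_.id := by
    conv_lhs => rw [← p.bigR_conj σ, ← kron_conj σ (p.Theta L1m),
      ← stackN_conj σ (p.Theta1 L1m L2m)]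
    rw [Matrix.transpose_submatrix]
    rw [show (p.bigR N).submatrix ⇑(pe σ n₁) ⇑(pe σ n₁) +
        (p.M2 N ((2:ℝ) • Z)).submatrix ⇑(pe σ n₁) ⇑(pe σ n₁)
      = (p.bigR N + p.M2 N ((2:ℝ) • Z)).submatrix ⇑(pe σ n₁) ⇑(pe σ n₁) from rfl]
    simp only [Matrix.submatrix_mul_equiv]
  have h2 : Z.submatrix ⇑(pe σ n) ⇑(pe σ n) * p.bigBhat N * stackN N (p.Theta1 L1m L2m)
      = (Z * p.bigBhat N * stackN N (p.Theta1 L1m L2m)).submatrix ⇑(pe σ n) _root_.id := by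
    conv_lhs => rw [← p.bigBhat_conj σ, ← stackN_conj σ (p.Theta1 L1m L2m)]
    simp only [Matrix.submatrix_mul_equiv]
  have hD : ((p.bigA N)ᵀ - (kronIN N (p.Theta L1m))ᵀ * (p.bigBhat N)ᵀ).submatrix
        ⇑(pe σ n) ⇑(pe σ n)
      = (p.bigA N)ᵀ - (kronIN N (p.Theta L1m))ᵀ * (p.bigBhat N)ᵀ := by
    have h := congrFun (congrFun (Matrix.submatrix_sub ((p.bigA N)ᵀ)
      ((kronIN N (p.Theta L1m))ᵀ * (p.bigBhat N)ᵀ)) ⇑(pe σ n)) ⇑(pe σ n)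
    rw [h, Pi.sub_apply, Pi.sub_apply]
    congr 1
    · rw [← Matrix.transpose_submatrix, p.bigA_conj σ]
    · rw [Matrix.submatrix_mul _ _ ⇑(pe σ n) ⇑(pe σ n₁) ⇑(pe σ n) (pe σ n₁).bijective]
      rw [← Matrix.transpose_submatrix, ← Matrix.transpose_submatrix,
        kron_conj σ, p.bigBhat_conj σ]
  have h3 : ((p.bigA N)ᵀ - (kronIN N (p.Theta L1m))ᵀ * (p.bigBhat N)ᵀ) *
        W.submatrix ⇑(pe σ n) _root_.id
      = (((p.bigA N)ᵀ - (kronIN N (p.Theta L1m))ᵀ * (p.bigBhat N)ᵀ) * W).submatrix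
          ⇑(pe σ n) _root_.id := by
    conv_lhs => rw [← hD]
    simp only [Matrix.submatrix_mul_equiv]
  have h4 : W.submatrix ⇑(pe σ n) _root_.id * p.Z1 L1m L2m
      = (W * p.Z1 L1m L2m).submatrix ⇑(pe σ n) _root_.id := by
    conv_lhs => rw [show p.Z1 L1m L2m = (p.Z1 L1m L2m).submatrix _root_.id _root_.id from
      (Matrix.submatrix_id_id _).symm]
    rw [hidn]
    simp only [Matrix.submatrix_mul_equiv]
  have hV : ((kronIN N (p.Theta L1m))ᵀ * (p.bigIhat N)ᵀ * (p.bigB0 N)ᵀ).submatrix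
        ⇑(pe σ n) ⇑(pe σ n)
      = (kronIN N (p.Theta L1m))ᵀ * (p.bigIhat N)ᵀ * (p.bigB0 N)ᵀ := by
    rw [Matrix.submatrix_mul _ _ ⇑(pe σ n) _root_.id ⇑(pe σ n) Function.bijective_id]
    rw [Matrix.submatrix_mul _ _ ⇑(pe σ n) ⇑(pe σ n₁) _root_.id (pe σ n₁).bijective]
    rw [← Matrix.transpose_submatrix, ← Matrix.transpose_submatrix,
      ← Matrix.transpose_submatrix, kron_conj σ, p.bigIhat_conj σ, p.bigB0_conj σ]
  have h5 : (kronIN N (p.Theta L1m))ᵀ * (p.bigIhat N)ᵀ * (p.bigB0 N)ᵀ *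
        (W.submatrix ⇑(pe σ n) _root_.id) * p.Z0 L1m L2m
      = ((kronIN N (p.Theta L1m))ᵀ * (p.bigIhat N)ᵀ * (p.bigB0 N)ᵀ * W *
          p.Z0 L1m L2m).submatrix ⇑(pe σ n) _root_.id := by
    conv_lhs => rw [← hV, show p.Z0 L1m L2m = (p.Z0 L1m L2m).submatrix _root_.id _root_.id
      from (Matrix.submatrix_id_id _).symm]
    rw [hidn]
    simp only [Matrix.submatrix_mul_equiv]
  rw [h1, h2, h3, h4, h5]
  rfl

end Conj

end Params

/-! ### Linearity and bounds for `M2`, difference identities, continuity -/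

namespace Params

section M2Lin

variable {n n₁ : ℕ} (p : Params n n₁) (N : ℕ)

lemma M2_add (Z W : Matrix (Fin N × Fin n) (Fin N × Fin n) ℝ) :
    p.M2 N (Z + W) = p.M2 N Z + p.M2 N W := by
  unfold Params.M2
  simp only [Matrix.mul_add, Matrix.add_mul, Finset.sum_add_distrib, smul_add]
  abel

lemma M2_smul (c : ℝ) (Z : Matrix (Fin N × Fin n) (Fin N × Fin n) ℝ) :
    p.M2 N (c • Z) = c • p.M2 N Z := by
  unfold Params.M2
  simp only [Matrix.mul_smul, Matrix.smul_mul, ← Finset.smul_sum, smul_add, smul_smul,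
    mul_comm]

lemma M2_sub (Z W : Matrix (Fin N × Fin n) (Fin N × Fin n) ℝ) :
    p.M2 N (Z - W) = p.M2 N Z - p.M2 N W := by
  rw [sub_eq_add_neg, M2_add, show -W = (-1 : ℝ) • W by simp, M2_smul]
  simp [sub_eq_add_neg]

/-- `M2` as a linear map. -/
noncomputable def M2lin :
    Matrix (Fin N × Fin n) (Fin N × Fin n) ℝ →ₗ[ℝ] Matrix (Fin N × Fin n₁) (Fin N × Fin n₁) ℝ where
  toFun Z := p.M2 N Z
  map_add' Z W := p.M2_add N Z W
  map_smul' c Z := p.M2_smul N c Z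

end M2Lin

section M2Bound

attribute [local instance] Matrix.normedAddCommGroup Matrix.normedSpace

variable {n n₁ : ℕ} (p : Params n n₁) (N : ℕ)

lemma exists_M2_bound : ∃ C : ℝ, 0 ≤ C ∧
    ∀ Z : Matrix (Fin N × Fin n) (Fin N × Fin n) ℝ, ‖p.M2 N Z‖ ≤ C * ‖Z‖ := by
  obtain ⟨C, hC0, hC⟩ := (LinearMap.toContinuousLinearMap (p.M2lin N)).bound
  exact ⟨C, hC0.le, fun Z => hC Z⟩

end M2Bound

section Diff

variable {n n₁ : ℕ} (p : Params n n₁) (N : ℕ)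

lemma Pcheck1RHS_sub (Θ : Matrix (Fin n₁) (Fin n) ℝ)
    (X Y : Matrix (Fin N × Fin n) (Fin N × Fin n) ℝ) :
    p.Pcheck1RHS N Θ X - p.Pcheck1RHS N Θ Y =
      (kronIN N Θ)ᵀ * p.M2 N ((2:ℝ) • (X - Y)) * kronIN N Θ
      + (X - Y) * (p.bigA N - p.bigBhat N * kronIN N Θ)
      + (p.bigA N - p.bigBhat N * kronIN N Θ)ᵀ * (X - Y) := by
  have hM2 : p.M2 N ((2:ℝ) • (X - Y)) = p.M2 N ((2:ℝ) • X) - p.M2 N ((2:ℝ) • Y) := by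
    rw [smul_sub, p.M2_sub]
  rw [hM2]
  unfold Params.Pcheck1RHS
  simp only [Matrix.mul_add, Matrix.add_mul, Matrix.mul_sub, Matrix.sub_mul]
  abel

lemma Pcheck12RHS_sub (L1m L2m : Matrix (Fin n) (Fin n) ℝ)
    (P1m : Matrix (Fin N × Fin n) (Fin N × Fin n) ℝ)
    (X Y : Matrix (Fin N × Fin n) (Fin n) ℝ) :
    p.Pcheck12RHS N L1m L2m P1m X - p.Pcheck12RHS N L1m L2m P1m Y =
      ((p.bigA N)ᵀ - (kronIN N (p.Theta L1m))ᵀ * (p.bigBhat N)ᵀ) * (X - Y)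
      + (X - Y) * p.Z1 L1m L2m
      - (kronIN N (p.Theta L1m))ᵀ * (p.bigIhat N)ᵀ * (p.bigB0 N)ᵀ * (X - Y) *
          p.Z0 L1m L2m := by
  unfold Params.Pcheck12RHS
  simp only [Matrix.mul_sub, Matrix.sub_mul]
  abel

end Diff

section Cont

variable {n n₁ : ℕ} (p : Params n n₁) {N : ℕ}
variable {X : Type*} [TopologicalSpace X] {s : Set X}

lemma contOn_kron {a b : ℕ} {M : X → Matrix (Fin a) (Fin b) ℝ}
    (h : ContinuousOn M s) : ContinuousOn (fun x => kronIN N (M x)) s := by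
  apply continuousOn_matrix
  intro i j
  by_cases hc : i.1 = j.1
  · simp only [kronIN, Matrix.of_apply, hc, if_true]
    exact matrix_continuousOn_entry h _ _
  · simp only [kronIN, Matrix.of_apply, hc, if_false]
    exact continuousOn_const

lemma contOn_stack {a b : ℕ} {M : X → Matrix (Fin a) (Fin b) ℝ}
    (h : ContinuousOn M s) : ContinuousOn (fun x => stackN N (M x)) s := by
  apply continuousOn_matrix
  intro i j
  simp only [stackN, Matrix.of_apply]
  exact matrix_continuousOn_entry h _ _

lemma contOn_M2 {Z : X → Matrix (Fin N × Fin n) (Fin N × Fin n) ℝ}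
    (h : ContinuousOn Z s) : ContinuousOn (fun x => p.M2 N (Z x)) s := by
  unfold Params.M2
  apply ContinuousOn.add
  · apply ContinuousOn.fun_const_smul
    apply continuousOn_finset_sum
    intro i _
    exact (((continuousOn_const.mmul h).mmul continuousOn_const).mmul continuousOn_const)
  · apply ContinuousOn.fun_const_smul
    exact (((continuousOn_const.mmul h).mmul continuousOn_const).mmul continuousOn_const)

end Cont

end Params

section NormTrans

attribute [local instance] Matrix.normedAddCommGroup Matrix.normedSpace

lemma matrix_norm_transpose {m l : Type*} [Fintype m] [Fintype l] (M : Matrix m l ℝ) :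
    ‖Mᵀ‖ = ‖M‖ := by
  apply le_antisymm
  · rw [Matrix.norm_le_iff (norm_nonneg M)]
    intro i j
    exact Matrix.norm_entry_le_entrywise_sup_norm (A := M) (i := j) (j := i)
  · rw [Matrix.norm_le_iff (norm_nonneg Mᵀ)]
    intro i j
    exact Matrix.norm_entry_le_entrywise_sup_norm (A := Mᵀ) (i := j) (j := i)

end NormTrans

section MainAux

set_option maxHeartbeats 2000000

attribute [local instance] Matrix.normedAddCommGroup Matrix.normedSpace

variable {n n₁ : ℕ}

lemma main_aux (p : Params n n₁) (hp : p.Standing)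
    (Λ₁ Λ₂ : ℝ → Matrix (Fin n) (Fin n) ℝ) (hLim : p.IsSolLim Λ₁ Λ₂)
    (N : ℕ) (hN : 1 ≤ N) (P1 : ℝ → Matrix (Fin N × Fin n) (Fin N × Fin n) ℝ)
    (hP1 : p.IsSolPcheck1 N Λ₁ P1) :
    ∃ P12 : ℝ → Matrix (Fin N × Fin n) (Fin n) ℝ,
      p.IsSolPcheck12 N Λ₁ Λ₂ P1 P12 ∧
      (∀ P12' : ℝ → Matrix (Fin N × Fin n) (Fin n) ℝ,
        p.IsSolPcheck12 N Λ₁ Λ₂ P1 P12' →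
        ∀ t ∈ Icc (0 : ℝ) p.T, P12' t = P12 t) ∧
      ∃ Pi12 : ℝ → Matrix (Fin n) (Fin n) ℝ,
        ∀ t ∈ Icc (0 : ℝ) p.T, ∀ (i : Fin N) (k l : Fin n),
          P12 t (i, k) l = Pi12 t k l := by
  have hT : (0:ℝ) < p.T := hp.2.2.1
  -- continuity of the data
  have hcΛ1 : ContinuousOn Λ₁ (Icc (0:ℝ) p.T) := contOn_of_hasDeriv hLim.2.2.2.2.1
  have hcΛ2 : ContinuousOn Λ₂ (Icc (0:ℝ) p.T) := contOn_of_hasDeriv hLim.2.2.2.2.2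
  have hcP1 : ContinuousOn P1 (Icc (0:ℝ) p.T) := contOn_of_hasDeriv hP1.2
  have hdet1 : ∀ t ∈ Icc (0:ℝ) p.T, (p.R1 (Λ₁ t)).det ≠ 0 :=
    fun t ht => ((hLim.2.1 t ht).1.det_pos).ne'
  have hdet2 : ∀ t ∈ Icc (0:ℝ) p.T, (p.R2 (Λ₁ t) (Λ₂ t)).det ≠ 0 :=
    fun t ht => ((hLim.2.1 t ht).2.det_pos).ne'
  have hcR1 : ContinuousOn (fun t => p.R1 (Λ₁ t)) (Icc (0:ℝ) p.T) := by
    unfold Params.R1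
    exact continuousOn_const.add ((continuousOn_const.mmul hcΛ1).mmul continuousOn_const)
  have hcR2 : ContinuousOn (fun t => p.R2 (Λ₁ t) (Λ₂ t)) (Icc (0:ℝ) p.T) := by
    unfold Params.R2
    exact (continuousOn_const.add
      ((continuousOn_const.mmul hcΛ1).mmul continuousOn_const)).add
      ((continuousOn_const.mmul (hcΛ1.add hcΛ2)).mmul continuousOn_const)
  have hcR1i : ContinuousOn (fun t => (p.R1 (Λ₁ t))⁻¹) (Icc (0:ℝ) p.T) :=
    hcR1.matrix_inv hdet1
  have hcR2i : ContinuousOn (fun t => (p.R2 (Λ₁ t) (Λ₂ t))⁻¹) (Icc (0:ℝ) p.T) :=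
    hcR2.matrix_inv hdet2
  have hcTh : ContinuousOn (fun t => p.Theta (Λ₁ t)) (Icc (0:ℝ) p.T) := by
    unfold Params.Theta
    exact (hcR1i.mmul continuousOn_const).mmul hcΛ1
  have hcTh1 : ContinuousOn (fun t => p.Theta1 (Λ₁ t) (Λ₂ t)) (Icc (0:ℝ) p.T) := by
    unfold Params.Theta1
    exact (((hcR2i.sub hcR1i).mmul continuousOn_const).mmul (hcΛ1.add hcΛ2)).add
      ((hcR1i.mmul continuousOn_const).mmul hcΛ2)
  have hcZ0 : ContinuousOn (fun t => p.Z0 (Λ₁ t) (Λ₂ t)) (Icc (0:ℝ) p.T) := by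
    unfold Params.Z0
    exact (continuousOn_const.mmul (hcTh.add hcTh1)).neg
  have hcZ1 : ContinuousOn (fun t => p.Z1 (Λ₁ t) (Λ₂ t)) (Icc (0:ℝ) p.T) := by
    unfold Params.Z1
    exact continuousOn_const.sub (continuousOn_const.mmul (hcTh.add hcTh1))
  have hckron : ContinuousOn (fun t => kronIN N (p.Theta (Λ₁ t))) (Icc (0:ℝ) p.T) :=
    Params.contOn_kron hcTh
  have hcstack : ContinuousOn (fun t => stackN N (p.Theta1 (Λ₁ t) (Λ₂ t)))
      (Icc (0:ℝ) p.T) := Params.contOn_stack hcTh1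
  have hcM2 : ContinuousOn (fun t => p.M2 N ((2:ℝ) • P1 t)) (Icc (0:ℝ) p.T) :=
    p.contOn_M2 (hcP1.const_smul (2:ℝ))
  -- coefficient functions of the linear ODE for P12
  have hcA1 : ContinuousOn
      (fun t => (p.bigA N)ᵀ - (kronIN N (p.Theta (Λ₁ t)))ᵀ * (p.bigBhat N)ᵀ)
      (Icc (0:ℝ) p.T) :=
    continuousOn_const.sub (hckron.mtrans.mmul continuousOn_const)
  have hcW : ContinuousOn
      (fun t => (kronIN N (p.Theta (Λ₁ t)))ᵀ * (p.bigIhat N)ᵀ * (p.bigB0 N)ᵀ)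
      (Icc (0:ℝ) p.T) :=
    (hckron.mtrans.mmul continuousOn_const).mmul continuousOn_const
  obtain ⟨cA, hcAb⟩ := isCompact_Icc.exists_bound_of_continuousOn hcA1
  obtain ⟨cZ1, hcZ1b⟩ := isCompact_Icc.exists_bound_of_continuousOn hcZ1
  obtain ⟨cW, hcWb⟩ := isCompact_Icc.exists_bound_of_continuousOn hcW
  obtain ⟨cZ0, hcZ0b⟩ := isCompact_Icc.exists_bound_of_continuousOn hcZ0
  set κ : ℝ := (Fintype.card (Fin N × Fin n) : ℝ) with hκdef
  set κn : ℝ := (Fintype.card (Fin n) : ℝ) with hκndef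
  have hκ0 : 0 ≤ κ := Nat.cast_nonneg _
  have hκn0 : 0 ≤ κn := Nat.cast_nonneg _
  set K0 : ℝ := κ * max cA 0 + κn * max cZ1 0 + κn * (κ * max cW 0 * max cZ0 0) with hK0def
  have hK0 : 0 ≤ K0 := by positivity
  -- Lipschitz property of the P12 vector field
  have hlip : ∀ t ∈ Icc (0:ℝ) p.T, LipschitzWith K0.toNNReal
      (fun X => -(p.Pcheck12RHS N (Λ₁ t) (Λ₂ t) (P1 t) X)) := by
    intro t ht
    apply LipschitzWith.of_dist_le_mul
    intro X Y
    rw [dist_eq_norm, dist_eq_norm, Real.coe_toNNReal _ hK0]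
    show ‖-(p.Pcheck12RHS N (Λ₁ t) (Λ₂ t) (P1 t) X) -
        -(p.Pcheck12RHS N (Λ₁ t) (Λ₂ t) (P1 t) Y)‖ ≤ K0 * ‖X - Y‖
    rw [neg_sub_neg, norm_sub_rev, p.Pcheck12RHS_sub N]
    have b1 : ‖((p.bigA N)ᵀ - (kronIN N (p.Theta (Λ₁ t)))ᵀ * (p.bigBhat N)ᵀ) * (X - Y)‖
        ≤ κ * max cA 0 * ‖X - Y‖ := by
      calc ‖((p.bigA N)ᵀ - (kronIN N (p.Theta (Λ₁ t)))ᵀ * (p.bigBhat N)ᵀ) * (X - Y)‖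
          ≤ κ * ‖(p.bigA N)ᵀ - (kronIN N (p.Theta (Λ₁ t)))ᵀ * (p.bigBhat N)ᵀ‖ * ‖X - Y‖ :=
            norm_mmul_le _ _
        _ ≤ κ * max cA 0 * ‖X - Y‖ := by
            gcongr
            exact (hcAb t ht).trans (le_max_left _ _)
    have b2 : ‖(X - Y) * p.Z1 (Λ₁ t) (Λ₂ t)‖ ≤ κn * max cZ1 0 * ‖X - Y‖ := by
      calc ‖(X - Y) * p.Z1 (Λ₁ t) (Λ₂ t)‖
          ≤ κn * ‖X - Y‖ * ‖p.Z1 (Λ₁ t) (Λ₂ t)‖ := norm_mmul_le _ _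
        _ ≤ κn * ‖X - Y‖ * max cZ1 0 := by
            gcongr
            exact (hcZ1b t ht).trans (le_max_left _ _)
        _ = κn * max cZ1 0 * ‖X - Y‖ := by ring
    have b3 : ‖(kronIN N (p.Theta (Λ₁ t)))ᵀ * (p.bigIhat N)ᵀ * (p.bigB0 N)ᵀ * (X - Y) *
        p.Z0 (Λ₁ t) (Λ₂ t)‖ ≤ κn * (κ * max cW 0 * max cZ0 0) * ‖X - Y‖ := by
      calc ‖(kronIN N (p.Theta (Λ₁ t)))ᵀ * (p.bigIhat N)ᵀ * (p.bigB0 N)ᵀ * (X - Y) *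
            p.Z0 (Λ₁ t) (Λ₂ t)‖
          ≤ κn * ‖(kronIN N (p.Theta (Λ₁ t)))ᵀ * (p.bigIhat N)ᵀ * (p.bigB0 N)ᵀ * (X - Y)‖ *
              ‖p.Z0 (Λ₁ t) (Λ₂ t)‖ := norm_mmul_le _ _
        _ ≤ κn * (κ * ‖(kronIN N (p.Theta (Λ₁ t)))ᵀ * (p.bigIhat N)ᵀ * (p.bigB0 N)ᵀ‖ *
              ‖X - Y‖) * ‖p.Z0 (Λ₁ t) (Λ₂ t)‖ := by
            gcongr
            exact norm_mmul_le _ _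
        _ ≤ κn * (κ * max cW 0 * ‖X - Y‖) * max cZ0 0 := by
            gcongr
            · exact (hcWb t ht).trans (le_max_left _ _)
            · exact (hcZ0b t ht).trans (le_max_left _ _)
        _ = κn * (κ * max cW 0 * max cZ0 0) * ‖X - Y‖ := by ring
    calc ‖((p.bigA N)ᵀ - (kronIN N (p.Theta (Λ₁ t)))ᵀ * (p.bigBhat N)ᵀ) * (X - Y)
          + (X - Y) * p.Z1 (Λ₁ t) (Λ₂ t)
          - (kronIN N (p.Theta (Λ₁ t)))ᵀ * (p.bigIhat N)ᵀ * (p.bigB0 N)ᵀ * (X - Y) *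
              p.Z0 (Λ₁ t) (Λ₂ t)‖
        ≤ ‖((p.bigA N)ᵀ - (kronIN N (p.Theta (Λ₁ t)))ᵀ * (p.bigBhat N)ᵀ) * (X - Y)
            + (X - Y) * p.Z1 (Λ₁ t) (Λ₂ t)‖
          + ‖(kronIN N (p.Theta (Λ₁ t)))ᵀ * (p.bigIhat N)ᵀ * (p.bigB0 N)ᵀ * (X - Y) *
              p.Z0 (Λ₁ t) (Λ₂ t)‖ := norm_sub_le _ _
      _ ≤ (κ * max cA 0) * ‖X - Y‖ + (κn * max cZ1 0) * ‖X - Y‖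
          + (κn * (κ * max cW 0 * max cZ0 0)) * ‖X - Y‖ := by
            have h4 := norm_add_le (((p.bigA N)ᵀ -
              (kronIN N (p.Theta (Λ₁ t)))ᵀ * (p.bigBhat N)ᵀ) * (X - Y))
              ((X - Y) * p.Z1 (Λ₁ t) (Λ₂ t))
            linarith
      _ = K0 * ‖X - Y‖ := by rw [hK0def]; ring
  -- continuity in t of the P12 vector field
  have hvcont : ∀ X : Matrix (Fin N × Fin n) (Fin n) ℝ,
      ContinuousOn (fun t => -(p.Pcheck12RHS N (Λ₁ t) (Λ₂ t) (P1 t) X))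
        (Icc (0:ℝ) p.T) := by
    intro X
    apply ContinuousOn.neg
    unfold Params.Pcheck12RHS
    exact (((((hckron.mtrans.mmul (continuousOn_const.add hcM2)).mmul hcstack).sub
      ((hcP1.mmul continuousOn_const).mmul hcstack)).add
      (hcA1.mmul continuousOn_const)).add
      (continuousOn_const.mmul hcZ1)).sub
      ((hcW.mmul continuousOn_const).mmul hcZ0)
  -- existence
  obtain ⟨P12, hP12T, hP12d⟩ := ode_term_exist
    (fun t X => -(p.Pcheck12RHS N (Λ₁ t) (Λ₂ t) (P1 t) X)) 0 p.T hT.le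
    K0.toNNReal hlip hvcont 0
  -- Lipschitz for the P1 vector field (needed for symmetry)
  obtain ⟨cM2c, hcM2c0, hM2cb⟩ := p.exists_M2_bound N
  obtain ⟨cK, hcKb⟩ := isCompact_Icc.exists_bound_of_continuousOn hckron
  have hcCf : ContinuousOn (fun t => p.bigA N - p.bigBhat N * kronIN N (p.Theta (Λ₁ t)))
      (Icc (0:ℝ) p.T) := continuousOn_const.sub (continuousOn_const.mmul hckron)
  obtain ⟨cC, hcCb⟩ := isCompact_Icc.exists_bound_of_continuousOn hcCf
  set κ1 : ℝ := (Fintype.card (Fin N × Fin n₁) : ℝ) with hκ1def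
  have hκ10 : 0 ≤ κ1 := Nat.cast_nonneg _
  set K1 : ℝ := 2 * κ1 * κ1 * max cK 0 * max cK 0 * cM2c + κ * max cC 0 + κ * max cC 0
    with hK1def
  have hK1 : 0 ≤ K1 := by positivity
  have hlip1 : ∀ t ∈ Icc (0:ℝ) p.T, LipschitzWith K1.toNNReal
      (fun X => -(p.Pcheck1RHS N (p.Theta (Λ₁ t)) X)) := by
    intro t ht
    apply LipschitzWith.of_dist_le_mul
    intro X Y
    rw [dist_eq_norm, dist_eq_norm, Real.coe_toNNReal _ hK1]
    show ‖-(p.Pcheck1RHS N (p.Theta (Λ₁ t)) X) - -(p.Pcheck1RHS N (p.Theta (Λ₁ t)) Y)‖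
      ≤ K1 * ‖X - Y‖
    rw [neg_sub_neg, norm_sub_rev, p.Pcheck1RHS_sub N]
    have b1 : ‖(kronIN N (p.Theta (Λ₁ t)))ᵀ * p.M2 N ((2:ℝ) • (X - Y)) *
        kronIN N (p.Theta (Λ₁ t))‖
        ≤ (2 * κ1 * κ1 * max cK 0 * max cK 0 * cM2c) * ‖X - Y‖ := by
      have hM2n : ‖p.M2 N ((2:ℝ) • (X - Y))‖ ≤ cM2c * (2 * ‖X - Y‖) := by
        have := hM2cb ((2:ℝ) • (X - Y))
        rw [norm_smul] at this
        simpa [Real.norm_ofNat] using this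
      have hKn : ‖(kronIN N (p.Theta (Λ₁ t)))ᵀ‖ ≤ max cK 0 := by
        rw [matrix_norm_transpose]
        exact (hcKb t ht).trans (le_max_left _ _)
      have hKn' : ‖kronIN N (p.Theta (Λ₁ t))‖ ≤ max cK 0 :=
        (hcKb t ht).trans (le_max_left _ _)
      calc ‖(kronIN N (p.Theta (Λ₁ t)))ᵀ * p.M2 N ((2:ℝ) • (X - Y)) *
            kronIN N (p.Theta (Λ₁ t))‖
          ≤ κ1 * ‖(kronIN N (p.Theta (Λ₁ t)))ᵀ * p.M2 N ((2:ℝ) • (X - Y))‖ *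
              ‖kronIN N (p.Theta (Λ₁ t))‖ := norm_mmul_le _ _
        _ ≤ κ1 * (κ1 * ‖(kronIN N (p.Theta (Λ₁ t)))ᵀ‖ * ‖p.M2 N ((2:ℝ) • (X - Y))‖) *
              ‖kronIN N (p.Theta (Λ₁ t))‖ := by
            gcongr
            exact norm_mmul_le _ _
        _ ≤ κ1 * (κ1 * max cK 0 * (cM2c * (2 * ‖X - Y‖))) * max cK 0 := by
            gcongr
        _ = (2 * κ1 * κ1 * max cK 0 * max cK 0 * cM2c) * ‖X - Y‖ := by ring
    have b2 : ‖(X - Y) * (p.bigA N - p.bigBhat N * kronIN N (p.Theta (Λ₁ t)))‖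
        ≤ (κ * max cC 0) * ‖X - Y‖ := by
      calc ‖(X - Y) * (p.bigA N - p.bigBhat N * kronIN N (p.Theta (Λ₁ t)))‖
          ≤ κ * ‖X - Y‖ * ‖p.bigA N - p.bigBhat N * kronIN N (p.Theta (Λ₁ t))‖ :=
            norm_mmul_le _ _
        _ ≤ κ * ‖X - Y‖ * max cC 0 := by
            gcongr
            exact (hcCb t ht).trans (le_max_left _ _)
        _ = (κ * max cC 0) * ‖X - Y‖ := by ring
    have b3 : ‖(p.bigA N - p.bigBhat N * kronIN N (p.Theta (Λ₁ t)))ᵀ * (X - Y)‖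
        ≤ (κ * max cC 0) * ‖X - Y‖ := by
      calc ‖(p.bigA N - p.bigBhat N * kronIN N (p.Theta (Λ₁ t)))ᵀ * (X - Y)‖
          ≤ κ * ‖(p.bigA N - p.bigBhat N * kronIN N (p.Theta (Λ₁ t)))ᵀ‖ * ‖X - Y‖ :=
            norm_mmul_le _ _
        _ ≤ κ * max cC 0 * ‖X - Y‖ := by
            gcongr
            rw [matrix_norm_transpose]
            exact (hcCb t ht).trans (le_max_left _ _)
    calc ‖(kronIN N (p.Theta (Λ₁ t)))ᵀ * p.M2 N ((2:ℝ) • (X - Y)) *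
          kronIN N (p.Theta (Λ₁ t))
          + (X - Y) * (p.bigA N - p.bigBhat N * kronIN N (p.Theta (Λ₁ t)))
          + (p.bigA N - p.bigBhat N * kronIN N (p.Theta (Λ₁ t)))ᵀ * (X - Y)‖
        ≤ ‖(kronIN N (p.Theta (Λ₁ t)))ᵀ * p.M2 N ((2:ℝ) • (X - Y)) *
            kronIN N (p.Theta (Λ₁ t))
            + (X - Y) * (p.bigA N - p.bigBhat N * kronIN N (p.Theta (Λ₁ t)))‖
          + ‖(p.bigA N - p.bigBhat N * kronIN N (p.Theta (Λ₁ t)))ᵀ * (X - Y)‖ :=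
            norm_add_le _ _
      _ ≤ (2 * κ1 * κ1 * max cK 0 * max cK 0 * cM2c) * ‖X - Y‖
          + (κ * max cC 0) * ‖X - Y‖ + (κ * max cC 0) * ‖X - Y‖ := by
            have h4 := norm_add_le ((kronIN N (p.Theta (Λ₁ t)))ᵀ *
              p.M2 N ((2:ℝ) • (X - Y)) * kronIN N (p.Theta (Λ₁ t)))
              ((X - Y) * (p.bigA N - p.bigBhat N * kronIN N (p.Theta (Λ₁ t))))
            linarith
      _ = K1 * ‖X - Y‖ := by rw [hK1def]; ring
  -- matrix-level derivatives of P1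
  have hP1d : ∀ t ∈ Icc (0:ℝ) p.T, HasDerivWithinAt P1
      (-(p.Pcheck1RHS N (p.Theta (Λ₁ t)) (P1 t))) (Icc (0:ℝ) p.T) t := by
    intro t ht
    exact hasDerivWithinAt_matrix.mpr fun x y => hP1.2 t ht x y
  -- the block-symmetry statement
  have hblocks : ∀ (i : Fin N), ∀ t ∈ Icc (0:ℝ) p.T, ∀ (k l : Fin n),
      P12 t (i, k) l = P12 t (⟨0, hN⟩, k) l := by
    intro i t ht k l
    set σ : Equiv.Perm (Fin N) := Equiv.swap i ⟨0, hN⟩ with hσdef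
    -- conjugated P1 solves the same equation
    have hP1cd : ∀ u ∈ Icc (0:ℝ) p.T,
        HasDerivWithinAt (fun s => (P1 s).submatrix ⇑(pe σ n) ⇑(pe σ n))
          (-(p.Pcheck1RHS N (p.Theta (Λ₁ u))
            ((P1 u).submatrix ⇑(pe σ n) ⇑(pe σ n)))) (Icc (0:ℝ) p.T) u := by
      intro u hu
      apply hasDerivWithinAt_matrix.mpr
      intro x y
      have hd := hP1.2 u hu (pe σ n x) (pe σ n y)
      have hval : (-(p.Pcheck1RHS N (p.Theta (Λ₁ u))
          ((P1 u).submatrix ⇑(pe σ n) ⇑(pe σ n)))) x y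
          = (-(p.Pcheck1RHS N (p.Theta (Λ₁ u)) (P1 u))) (pe σ n x) (pe σ n y) := by
        rw [p.Pcheck1RHS_conj σ]
        rfl
      rw [hval]
      exact hd
    have hP1eq : ∀ u ∈ Icc (0:ℝ) p.T,
        (P1 u).submatrix ⇑(pe σ n) ⇑(pe σ n) = P1 u := by
      apply ode_term_unique (fun u X => -(p.Pcheck1RHS N (p.Theta (Λ₁ u)) X)) 0 p.T
        K1.toNNReal hlip1 hP1cd hP1d
      rw [hP1.1, p.bigQf_conj σ]
    -- row-permuted P12 solves the P12 equation
    have hP12rd : ∀ u ∈ Icc (0:ℝ) p.T,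
        HasDerivWithinAt (fun s => (P12 s).submatrix ⇑(pe σ n) _root_.id)
          (-(p.Pcheck12RHS N (Λ₁ u) (Λ₂ u) (P1 u)
            ((P12 u).submatrix ⇑(pe σ n) _root_.id))) (Icc (0:ℝ) p.T) u := by
      intro u hu
      apply hasDerivWithinAt_matrix.mpr
      intro x y
      have hd := hasDerivWithinAt_matrix.mp (hP12d u hu) (pe σ n x) y
      have hval : (-(p.Pcheck12RHS N (Λ₁ u) (Λ₂ u) (P1 u)
          ((P12 u).submatrix ⇑(pe σ n) _root_.id))) x y
          = (-(p.Pcheck12RHS N (Λ₁ u) (Λ₂ u) (P1 u) (P12 u))) (pe σ n x) y := by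
        conv_lhs => rw [← hP1eq u hu]
        rw [p.Pcheck12RHS_conj σ]
        rfl
      rw [hval]
      exact hd
    have hP12req : ∀ u ∈ Icc (0:ℝ) p.T,
        (P12 u).submatrix ⇑(pe σ n) _root_.id = P12 u := by
      apply ode_term_unique (fun u X => -(p.Pcheck12RHS N (Λ₁ u) (Λ₂ u) (P1 u) X)) 0 p.T
        K0.toNNReal hlip hP12rd hP12d
      rw [hP12T]
      rfl
    have := congrFun (congrFun (hP12req t ht) (⟨0, hN⟩, k)) l
    rw [Matrix.submatrix_apply] at this
    simp only [pe_apply, hσdef, Equiv.swap_apply_right, id_eq] at this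
    exact this
  refine ⟨P12, ⟨hP12T, ?_⟩, ?_, ?_⟩
  · intro t ht x y
    exact hasDerivWithinAt_matrix.mp (hP12d t ht) x y
  · intro P12' h' t ht
    refine ode_term_unique (fun t X => -(p.Pcheck12RHS N (Λ₁ t) (Λ₂ t) (P1 t) X)) 0 p.T
      K0.toNNReal hlip ?_ hP12d (h'.1.trans hP12T.symm) t ht
    intro u hu
    exact hasDerivWithinAt_matrix.mpr fun x y => h'.2 u hu x y
  · exact ⟨fun t k l => P12 t (⟨0, hN⟩, k) l, fun t ht i k l => hblocks i t ht k l⟩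

end MainAux

/-- the linear terminal value problem (ODE-P̌₁₂) has a unique solution on
[0,T], all of whose N blocks are equal. -/
theorem solPcheck12_exists_unique_equal_blocks {n n₁ : ℕ} (p : Params n n₁)
    (hp : p.Standing) (Λ₁ Λ₂ : ℝ → Matrix (Fin n) (Fin n) ℝ)
    (S : ℝ → Matrix (Fin n) (Fin 1) ℝ) (r : ℝ → ℝ)
    (hLim : p.IsSolLim Λ₁ Λ₂) (hSr : p.IsSolSr Λ₁ Λ₂ S r) :
    ∀ N : ℕ, 1 ≤ N →
      ∀ P1 : ℝ → Matrix (Fin N × Fin n) (Fin N × Fin n) ℝ,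
        p.IsSolPcheck1 N Λ₁ P1 →
        ∃ P12 : ℝ → Matrix (Fin N × Fin n) (Fin n) ℝ,
          p.IsSolPcheck12 N Λ₁ Λ₂ P1 P12 ∧
          (∀ P12' : ℝ → Matrix (Fin N × Fin n) (Fin n) ℝ,
            p.IsSolPcheck12 N Λ₁ Λ₂ P1 P12' →
            ∀ t ∈ Icc (0 : ℝ) p.T, P12' t = P12 t) ∧
          ∃ Pi12 : ℝ → Matrix (Fin n) (Fin n) ℝ,
            ∀ t ∈ Icc (0 : ℝ) p.T, ∀ (i : Fin N) (k l : Fin n),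
              P12 t (i, k) l = Pi12 t k l := by
  intro N hN P1 hP1
  exact main_aux p hp Λ₁ Λ₂ hLim N hN P1 hP1

end LQ
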